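/- arXiv:0804.0427 — 3 statements merged into one kernel-verified Lean document; each statement's English description precedes it below -/
import Mathlib

section
/- Let Γ be a crystallographic group with translation group T and point group Π, and let N be a normal subgroup of Γ. Then the group of translations of N (acting on Span(N)) is N ∩ T, the point group of N is isomorphic to Φ = {A ∈ Π : a+A ∈ N for some a}, and Φ is a normal subgroup of Π. -/
noncomputable section

/-- Euclidean `n`-space. -/
abbrev E (n : ℕ) := EuclideanSpace ℝ (Fin n)

/-- An isometry `a + A` of `E n`, acting by `x ↦ a + A x`, with `A` a linear isometry
(an element of `O(n)`). -/
@[ext] structure Iso (n : ℕ) where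
  a : E n
  A : E n ≃ₗᵢ[ℝ] E n

namespace Iso

variable {n : ℕ}

instance : Mul (Iso n) := ⟨fun x y => ⟨x.a + x.A y.a, y.A.trans x.A⟩⟩
instance : One (Iso n) := ⟨⟨0, LinearIsometryEquiv.refl ℝ (E n)⟩⟩
instance : Inv (Iso n) := ⟨fun x => ⟨-(x.A.symm x.a), x.A.symm⟩⟩

@[simp] lemma mul_a (x y : Iso n) : (x * y).a = x.a + x.A y.a := rfl
@[simp] lemma mul_A (x y : Iso n) : (x * y).A = y.A.trans x.A := rfl
@[simp] lemma one_a : (1 : Iso n).a = 0 := rfl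
@[simp] lemma one_A : (1 : Iso n).A = LinearIsometryEquiv.refl ℝ (E n) := rfl
@[simp] lemma inv_a (x : Iso n) : (x⁻¹).a = -(x.A.symm x.a) := rfl
@[simp] lemma inv_A (x : Iso n) : (x⁻¹).A = x.A.symm := rfl

/-- The group of isometries of `E n`, with composition as multiplication. -/
instance : Group (Iso n) where
  mul_assoc x y z := by
    refine Iso.ext ?_ ?_
    · simp [add_assoc]
    · ext v; simp
  one_mul x := by refine Iso.ext ?_ ?_ <;> simp
  mul_one x := by refine Iso.ext ?_ ?_ <;> simp
  inv_mul_cancel x := by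
    refine Iso.ext ?_ ?_
    · simp
    · ext v; simp

/-- The action of the isometry `a + A` on a point `x` of `E n`: `x ↦ a + A x`. -/
def act (g : Iso n) (x : E n) : E n := g.a + g.A x

/-- The translation `a + I`. -/
def trans (a : E n) : Iso n := ⟨a, LinearIsometryEquiv.refl ℝ (E n)⟩

/-- `g` is a translation if its linear part is the identity. -/
def IsTranslation (g : Iso n) : Prop := g.A = LinearIsometryEquiv.refl ℝ (E n)

/-- The subgroup of all translations of `E n`. -/
def translations (n : ℕ) : Subgroup (Iso n) where
  carrier := {g | g.IsTranslation}
  mul_mem' := by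
    intro x y hx hy
    simp only [Set.mem_setOf_eq, IsTranslation] at *
    rw [mul_A, hx, hy]; simp
  one_mem' := rfl
  inv_mem' := by
    intro x hx
    simp only [Set.mem_setOf_eq, IsTranslation] at *
    rw [inv_A, hx]; rfl

/-- The set of translation vectors of a set `S` of isometries:
`{a : E n | a + I ∈ S}`. -/
def transVecs (S : Set (Iso n)) : Set (E n) := {a | Iso.trans a ∈ S}

/-- `Span(S)`: the real linear span of the translation vectors of `S`. -/
def spanS (S : Set (Iso n)) : Submodule ℝ (E n) :=
  Submodule.span ℝ (transVecs S)

/-- A crystallographic (space) group: a group of isometries of `E n` that acts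
properly discontinuously (equivalently, is discrete) and cocompactly. -/
def IsCrystallographic (Γ : Subgroup (Iso n)) : Prop :=
  (∀ K : Set (E n), IsCompact K →
      {g : Iso n | g ∈ Γ ∧ ((Iso.act g '' K) ∩ K).Nonempty}.Finite) ∧
  ∃ K : Set (E n), IsCompact K ∧ ∀ x : E n, ∃ g ∈ Γ, g.act x ∈ K

/-- `N` is a normal subgroup of `Γ`. -/
def IsNormalIn (N Γ : Subgroup (Iso n)) : Prop :=
  N ≤ Γ ∧ ∀ g ∈ Γ, ∀ x ∈ N, g * x * g⁻¹ ∈ N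

/-- The completion of `S` in `Γ`:
`S̄ = {b+B ∈ Γ : b ∈ Span(S) and Span(S)ᗮ ⊆ Fix(B)}`. -/
def completion (Γ : Subgroup (Iso n)) (S : Set (Iso n)) : Set (Iso n) :=
  {g | g ∈ Γ ∧ g.a ∈ spanS S ∧ ∀ x ∈ (spanS S)ᗮ, g.A x = x}

end Iso

namespace Iso

/-- The linear-part homomorphism `a + A ↦ A`. -/
def AHom (n : ℕ) : Iso n →* (E n ≃ₗᵢ[ℝ] E n) where
  toFun g := g.A
  map_one' := rfl
  map_mul' _ _ := rfl

/-- The point group of `Γ`: the group of linear parts of elements of `Γ`. -/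
def pointGroup {n : ℕ} (Γ : Subgroup (Iso n)) : Subgroup (E n ≃ₗᵢ[ℝ] E n) :=
  Γ.map (AHom n)

end Iso

noncomputable section BieberbachAux

open Submodule Metric

variable {F : Type*} [NormedAddCommGroup F] [InnerProductSpace ℝ F]

/-- Generic affine isometry of an inner product space. -/
@[ext] structure AIso (F : Type*) [NormedAddCommGroup F] [InnerProductSpace ℝ F] where
  a : F
  A : F ≃ₗᵢ[ℝ] F

namespace AIso

instance : Mul (AIso F) := ⟨fun x y => ⟨x.a + x.A y.a, y.A.trans x.A⟩⟩
instance : One (AIso F) := ⟨⟨0, LinearIsometryEquiv.refl ℝ F⟩⟩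
instance : Inv (AIso F) := ⟨fun x => ⟨-(x.A.symm x.a), x.A.symm⟩⟩

@[simp] lemma mul_a (x y : AIso F) : (x * y).a = x.a + x.A y.a := rfl
@[simp] lemma mul_A (x y : AIso F) : (x * y).A = y.A.trans x.A := rfl
@[simp] lemma one_a : (1 : AIso F).a = 0 := rfl
@[simp] lemma one_A : (1 : AIso F).A = LinearIsometryEquiv.refl ℝ F := rfl
@[simp] lemma inv_a (x : AIso F) : (x⁻¹).a = -(x.A.symm x.a) := rfl
@[simp] lemma inv_A (x : AIso F) : (x⁻¹).A = x.A.symm := rfl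

instance : Group (AIso F) where
  mul_assoc x y z := by
    refine AIso.ext ?_ ?_
    · simp [add_assoc]
    · ext v; simp
  one_mul x := by refine AIso.ext ?_ ?_ <;> simp
  mul_one x := by refine AIso.ext ?_ ?_ <;> simp
  inv_mul_cancel x := by
    refine AIso.ext ?_ ?_
    · simp
    · ext v; simp

def act (g : AIso F) (x : F) : F := g.a + g.A x

def trans (a : F) : AIso F := ⟨a, LinearIsometryEquiv.refl ℝ F⟩

@[simp] lemma trans_a (a : F) : (trans a).a = a := rfl
@[simp] lemma trans_A (a : F) : (trans a).A = LinearIsometryEquiv.refl ℝ F := rfl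

lemma trans_mul_trans (a b : F) : trans a * trans b = trans (a + b) := by
  refine AIso.ext ?_ ?_ <;> simp [trans]

lemma trans_inv (a : F) : (trans a)⁻¹ = trans (-a) := by
  refine AIso.ext ?_ ?_
  · show -(LinearIsometryEquiv.refl ℝ F).symm a = -a
    rfl
  · rfl

lemma trans_zero : (trans (0 : F)) = 1 := by
  refine AIso.ext ?_ ?_ <;> simp [trans]

@[simp] lemma mul_A_apply (x y : AIso F) (v : F) : (x * y).A v = x.A (y.A v) := rfl
@[simp] lemma inv_A_apply (x : AIso F) (v : F) : (x⁻¹).A v = x.A.symm v := rfl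

/-- conjugation of a translation -/
lemma conj_trans (g : AIso F) (b : F) : g * trans b * g⁻¹ = trans (g.A b) := by
  refine AIso.ext ?_ ?_
  · simp [trans]
  · ext v; simp [trans]

/-- `Dle A ε`: the rotation `A` displaces by at most `ε` relatively. -/
def Dle (A : F ≃ₗᵢ[ℝ] F) (ε : ℝ) : Prop := ∀ x : F, ‖A x - x‖ ≤ ε * ‖x‖

lemma Dle.mono {A : F ≃ₗᵢ[ℝ] F} {ε ε' : ℝ} (h : Dle A ε) (hε : ε ≤ ε') : Dle A ε' :=
  fun x => (h x).trans (by nlinarith [norm_nonneg x])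

lemma Dle.nonneg_of {A : F ≃ₗᵢ[ℝ] F} {ε : ℝ} : 0 ≤ ε → Dle A ε → True := fun _ _ => trivial

lemma dle_symm {A : F ≃ₗᵢ[ℝ] F} {ε : ℝ} (h : Dle A ε) : Dle A.symm ε := by
  intro x
  have h1 := h (A.symm x)
  rw [A.apply_symm_apply] at h1
  rw [norm_sub_rev]
  calc ‖x - A.symm x‖ ≤ ε * ‖A.symm x‖ := h1
    _ = ε * ‖x‖ := by rw [(A.symm).norm_map x]

/-- commutator rotation estimate -/
lemma dle_commutator {X B : F ≃ₗᵢ[ℝ] F} {ξ ε : ℝ} (hX : Dle X ξ) (hB : Dle B ε)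
    (hξ : 0 ≤ ξ) (hε : 0 ≤ ε) :
    ∀ z : F, ‖X (B (X.symm (B.symm z))) - z‖ ≤ 2 * ξ * ε * ‖z‖ := by
  intro z
  set w := X.symm (B.symm z) with hw
  have hz : z = B (X w) := by simp [hw]
  have h1 : X (B w) - z = (X (B w - w) - (B w - w)) - (B (X w - w) - (X w - w)) := by
    rw [hz]; simp [map_sub]; abel
  have e1 : ‖X (B w - w) - (B w - w)‖ ≤ ξ * (ε * ‖w‖) := by
    have := hX (B w - w)
    exact this.trans (by nlinarith [hB w])
  have e2 : ‖B (X w - w) - (X w - w)‖ ≤ ε * (ξ * ‖w‖) := by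
    have := hB (X w - w)
    exact this.trans (by nlinarith [hX w])
  have hwz : ‖w‖ = ‖z‖ := by rw [hw]; simp
  calc ‖X (B w) - z‖ = ‖(X (B w - w) - (B w - w)) - (B (X w - w) - (X w - w))‖ := by rw [h1]
    _ ≤ ‖X (B w - w) - (B w - w)‖ + ‖B (X w - w) - (X w - w)‖ := norm_sub_le _ _
    _ ≤ ξ * (ε * ‖w‖) + ε * (ξ * ‖w‖) := add_le_add e1 e2
    _ = 2 * ξ * ε * ‖z‖ := by rw [hwz]; ring

end AIso

end BieberbachAux
noncomputable section Part2

open Submodule Metric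

variable {F : Type*} [NormedAddCommGroup F] [InnerProductSpace ℝ F]
  [FiniteDimensional ℝ F]

namespace AIso

/-- coerced orthogonal projection -/
def pj (W : Submodule ℝ F) (x : F) : F := (orthogonalProjection W x : F)

lemma pj_norm_le (W : Submodule ℝ F) (x : F) : ‖pj W x‖ ≤ ‖x‖ := by
  have h := orthogonalProjection_norm_le W
  have := (orthogonalProjection W).le_opNorm x
  calc ‖pj W x‖ = ‖orthogonalProjection W x‖ := rfl
    _ ≤ ‖orthogonalProjection W‖ * ‖x‖ := (orthogonalProjection W).le_opNorm x
    _ ≤ 1 * ‖x‖ := by nlinarith [norm_nonneg x]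
    _ = ‖x‖ := one_mul _

lemma pj_sub (W : Submodule ℝ F) (x y : F) : pj W x - pj W y = pj W (x - y) := by
  simp [pj, map_sub]

lemma pj_lip (W : Submodule ℝ F) (x y : F) : ‖pj W x - pj W y‖ ≤ ‖x - y‖ := by
  rw [pj_sub]; exact pj_norm_le W _

lemma pj_eq_self (W : Submodule ℝ F) {x : F} (hx : x ∈ W) : pj W x = x := by
  simp [pj, Submodule.starProjection_eq_self_iff.2 hx]

/-- the fixed subspace of a linear isometry -/
def fixSpace (B : F ≃ₗᵢ[ℝ] F) : Submodule ℝ F where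
  carrier := {x | B x = x}
  add_mem' := by intro a b ha hb; simp only [Set.mem_setOf_eq] at *; rw [map_add, ha, hb]
  zero_mem' := by simp
  smul_mem' := by intro c x hx; simp only [Set.mem_setOf_eq] at *; rw [map_smul, hx]

lemma mapsW {B : F ≃ₗᵢ[ℝ] F} {W : Submodule ℝ F}
    (hfix : ∀ v ∈ Wᗮ, B v = v) : ∀ w ∈ W, B w ∈ W := by
  intro w hw
  rw [← Submodule.orthogonal_orthogonal W]
  rw [Submodule.mem_orthogonal]
  intro v hv
  have h1 : B v = v := hfix v hv
  calc inner ℝ v (B w) = (inner ℝ (B v) (B w) : ℝ) := by rw [h1]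
    _ = inner ℝ v w := B.inner_map_map v w
    _ = 0 := by rw [real_inner_comm]; exact hv w hw

lemma diff_decomp {B : F ≃ₗᵢ[ℝ] F} {W : Submodule ℝ F}
    (hfix : ∀ v ∈ Wᗮ, B v = v) (y : F) :
    B y - y = B (pj W y) - pj W y ∧ B y - y ∈ W := by
  have hdec : pj W y + pj Wᗮ y = y :=
    Submodule.starProjection_add_starProjection_orthogonal (K := W) y
  have hBfix : B (pj Wᗮ y) = pj Wᗮ y := hfix _ (orthogonalProjection Wᗮ y).2
  have h1 : B y - y = B (pj W y) - pj W y := by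
    conv_lhs => rw [← hdec]
    rw [map_add, hBfix]; abel
  refine ⟨h1, ?_⟩
  rw [h1]
  exact Submodule.sub_mem W (mapsW hfix _ (orthogonalProjection W y).2)
    (orthogonalProjection W y).2

lemma exists_delta {B : F ≃ₗᵢ[ℝ] F} (hB : B ≠ LinearIsometryEquiv.refl ℝ F) :
    ∃ (W : Submodule ℝ F) (δ : ℝ), 0 < δ ∧ δ ≤ 1/100 ∧
      (∀ v ∈ Wᗮ, B v = v) ∧ (∀ w ∈ W, δ * ‖w‖ ≤ ‖B w - w‖) ∧ W ≠ ⊥ := by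
  set K := fixSpace B with hK
  set W := Kᗮ with hW
  have hWo : Wᗮ = K := Submodule.orthogonal_orthogonal K
  have hfix : ∀ v ∈ Wᗮ, B v = v := by
    intro v hv; rw [hWo] at hv; exact hv
  have hWne : W ≠ ⊥ := by
    intro h
    apply hB
    have hKtop : K = ⊤ := Submodule.orthogonal_eq_bot_iff.1 h
    ext x
    have : x ∈ K := hKtop ▸ Submodule.mem_top
    exact this
  -- minimum over the unit sphere of W
  obtain ⟨x1, hx1⟩ := Submodule.ne_bot_iff W |>.1 hWne
  have hx1' : x1 ∈ W := hx1.1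
  have hx1ne : x1 ≠ 0 := hx1.2
  set u : ↥W := (‖x1‖⁻¹ : ℝ) • ⟨x1, hx1'⟩ with hu
  have hnu : ‖u‖ = 1 := by
    rw [hu, norm_smul]
    have : ‖(⟨x1, hx1'⟩ : ↥W)‖ = ‖x1‖ := rfl
    rw [this]
    rw [Real.norm_eq_abs, abs_of_nonneg (inv_nonneg.2 (norm_nonneg x1))]
    exact inv_mul_cancel₀ (norm_ne_zero_iff.2 hx1ne)
  have hsne : (Metric.sphere (0:↥W) 1).Nonempty := ⟨u, by simp [hnu]⟩
  have hcs : IsCompact (Metric.sphere (0:↥W) 1) := isCompact_sphere _ _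
  have hcont : ContinuousOn (fun w : ↥W => ‖B (w:F) - (w:F)‖) (Metric.sphere (0:↥W) 1) := by
    apply Continuous.continuousOn
    exact (((B.continuous).comp continuous_subtype_val).sub continuous_subtype_val).norm
  obtain ⟨w0, hw0s, hw0min'⟩ := hcs.exists_isMinOn hsne hcont
  have hw0min : ∀ v ∈ Metric.sphere (0:↥W) 1, ‖B (w0:F) - (w0:F)‖ ≤ ‖B (v:F) - (v:F)‖ :=
    fun v hv => hw0min' hv
  set δ0 : ℝ := ‖B (w0:F) - (w0:F)‖ with hδ0
  have hδ0pos : 0 < δ0 := by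
    rw [hδ0, norm_pos_iff]
    intro h
    have hfixw : B (w0:F) = (w0:F) := by
      have := sub_eq_zero.1 h; exact this
    have hw0K : (w0:F) ∈ K := hfixw
    have hw0W : (w0:F) ∈ W := w0.2
    have : (w0:F) ∈ K ⊓ Kᗮ := ⟨hw0K, hw0W⟩
    have hz : (w0:F) = 0 := by
      have hd := Submodule.orthogonal_disjoint K
      have := hd.le_bot this
      simpa using this
    have : ‖(w0:F)‖ = 1 := by
      have := mem_sphere_iff_norm.1 hw0s
      simpa using this
    rw [hz] at this; simp at this
  refine ⟨W, min δ0 (1/100), lt_min hδ0pos (by norm_num), min_le_right _ _, hfix, ?_, hWne⟩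
  intro w hw
  by_cases hwz : w = 0
  · simp [hwz]
  · have hnw : ‖w‖ ≠ 0 := norm_ne_zero_iff.2 hwz
    set v : ↥W := (‖w‖⁻¹ : ℝ) • ⟨w, hw⟩ with hv
    have hnv : ‖v‖ = 1 := by
      rw [hv, norm_smul]
      have : ‖(⟨w, hw⟩ : ↥W)‖ = ‖w‖ := rfl
      rw [this, Real.norm_eq_abs, abs_of_nonneg (inv_nonneg.2 (norm_nonneg w))]
      exact inv_mul_cancel₀ hnw
    have hvs : v ∈ Metric.sphere (0:↥W) 1 := by simp [hnv]
    have hmin := hw0min v hvs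
    have hveq : (v : F) = ‖w‖⁻¹ • w := rfl
    rw [hveq] at hmin
    have hcomp : ‖B (‖w‖⁻¹ • w) - ‖w‖⁻¹ • w‖ = ‖w‖⁻¹ * ‖B w - w‖ := by
      rw [map_smul, ← smul_sub, norm_smul, Real.norm_eq_abs,
        abs_of_nonneg (inv_nonneg.2 (norm_nonneg w))]
    rw [hcomp] at hmin
    have h1 : δ0 * ‖w‖ ≤ ‖B w - w‖ := by
      have hpos : 0 < ‖w‖ := (norm_nonneg w).lt_of_ne (Ne.symm hnw)
      calc δ0 * ‖w‖ ≤ (‖w‖⁻¹ * ‖B w - w‖) * ‖w‖ := by nlinarith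
        _ = ‖B w - w‖ := by field_simp
    calc min δ0 (1/100) * ‖w‖ ≤ δ0 * ‖w‖ := by
          have := min_le_left δ0 (1/100); nlinarith [norm_nonneg w]
      _ ≤ ‖B w - w‖ := h1

/-- commutator translation formula -/
lemma comm_a_eq (γ u : AIso F) :
    (γ * u * γ⁻¹ * u⁻¹).a
      = -(γ.A (u.A (γ.A.symm γ.a) - γ.A.symm γ.a))
        + γ.A (u.a - u.A (γ.A.symm (u.A.symm u.a))) := by
  simp only [mul_a, inv_a, mul_A, inv_A, LinearIsometryEquiv.trans_apply, map_sub, map_neg,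
    LinearIsometryEquiv.apply_symm_apply]
  abel

lemma comm_a_second_bound {γ u : AIso F} {ξ : ℝ} (hX : Dle γ.A ξ) :
    ‖γ.A (u.a - u.A (γ.A.symm (u.A.symm u.a)))‖ ≤ ξ * ‖u.a‖ := by
  set w := u.A.symm u.a with hwdef
  have h0 : ‖γ.A (u.a - u.A (γ.A.symm w))‖ = ‖u.a - u.A (γ.A.symm w)‖ := γ.A.norm_map _
  have h1 : u.a - u.A (γ.A.symm w) = u.A w - u.A (γ.A.symm w) := by
    rw [hwdef, u.A.apply_symm_apply]
  have h2 : ‖u.A w - u.A (γ.A.symm w)‖ = ‖w - γ.A.symm w‖ := by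
    rw [← map_sub]; exact u.A.norm_map _
  have h3 : ‖w - γ.A.symm w‖ ≤ ξ * ‖w‖ := by
    rw [norm_sub_rev]; exact dle_symm hX w
  have h4 : ‖w‖ = ‖u.a‖ := u.A.symm.norm_map u.a
  rw [h0, h1, h2]
  rw [h4] at h3; exact h3

end AIso

end Part2
noncomputable section Part3

open Submodule Metric

variable {F : Type*} [NormedAddCommGroup F] [InnerProductSpace ℝ F]
  [FiniteDimensional ℝ F]

namespace AIso

/-- pigeonhole: any sequence of linear isometries has an infinite subfamily that is
pairwise pointwise `η`-close. -/
lemma pigeon (f : ℕ → (F ≃ₗᵢ[ℝ] F)) {η : ℝ} (hη : 0 < η) :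
    ∃ S : Set ℕ, S.Infinite ∧
      ∀ k ∈ S, ∀ l ∈ S, ∀ x : F, ‖f k x - f l x‖ ≤ η * ‖x‖ := by
  set φ : ℕ → (F →L[ℝ] F) := fun k => (f k).toLinearIsometry.toContinuousLinearMap with hφ
  have hball : ∀ k, φ k ∈ Metric.closedBall (0 : F →L[ℝ] F) 1 := by
    intro k
    rw [Metric.mem_closedBall, dist_zero_right]
    apply ContinuousLinearMap.opNorm_le_bound _ zero_le_one
    intro x
    have : ‖φ k x‖ = ‖x‖ := (f k).toLinearIsometry.norm_map x
    rw [this, one_mul]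
  have hc : IsCompact (Metric.closedBall (0 : F →L[ℝ] F) 1) :=
    isCompact_closedBall _ _
  have htb := hc.totallyBounded
  rw [Metric.totallyBounded_iff] at htb
  obtain ⟨t, htfin, htcov⟩ := htb (η/2) (by linarith)
  have hmem : ∀ k : ℕ, ∃ c ∈ t, φ k ∈ Metric.ball c (η/2) := by
    intro k
    have := htcov (hball k)
    simpa using this
  choose c hc1 hc2 using hmem
  have : ∃ y : ↥t, {k : ℕ | (⟨c k, hc1 k⟩ : ↥t) = y}.Infinite := by
    haveI : Finite ↥t := htfin.to_subtype
    obtain ⟨y, hy⟩ := Finite.exists_infinite_fiber (fun k : ℕ => (⟨c k, hc1 k⟩ : ↥t))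
    refine ⟨y, ?_⟩
    rw [← Set.infinite_coe_iff]
    exact hy
  obtain ⟨y, hy⟩ := this
  refine ⟨_, hy, ?_⟩
  intro k hk l hl x
  have hck : c k = (y : F →L[ℝ] F) := congrArg Subtype.val hk
  have hcl : c l = (y : F →L[ℝ] F) := congrArg Subtype.val hl
  have hk2 := hc2 k; have hl2 := hc2 l
  rw [hck] at hk2; rw [hcl] at hl2
  rw [Metric.mem_ball] at hk2 hl2
  have hdist : ‖φ k - φ l‖ ≤ η := by
    have h3 : dist (φ k) (φ l) ≤ dist (φ k) ↑y + dist (↑y : F →L[ℝ] F) (φ l) :=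
      dist_triangle _ _ _
    rw [dist_comm (↑y : F →L[ℝ] F) (φ l)] at h3
    rw [← dist_eq_norm]
    linarith [hk2.le, hl2.le]
  have := (φ k - φ l).le_opNorm x
  have heq : (φ k - φ l) x = f k x - f l x := rfl
  rw [heq] at this
  calc ‖f k x - f l x‖ ≤ ‖φ k - φ l‖ * ‖x‖ := this
    _ ≤ η * ‖x‖ := by nlinarith [norm_nonneg x]

/-- an infinite subgroup with no nontrivial translations contains nontrivial elements of
arbitrarily small rotation -/
lemma small_elements (G : Subgroup (AIso F)) (hGinf : (G : Set (AIso F)).Infinite)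
    (Htr : ∀ g ∈ G, g.A = LinearIsometryEquiv.refl ℝ F → g.a = 0)
    {η : ℝ} (hη : 0 < η) :
    ∃ u ∈ G, u ≠ 1 ∧ Dle u.A η := by
  set e := hGinf.natEmbedding with he
  obtain ⟨S, hSinf, hS⟩ := pigeon (fun k => ((e k : AIso F)).A) hη
  obtain ⟨k, hk⟩ := hSinf.nonempty
  obtain ⟨l, hl, hkl⟩ := ((hSinf.diff (Set.finite_singleton k)).nonempty)
  have hlS : l ∈ S := hl
  have hlk : l ≠ k := by
    intro h; apply hkl; rw [h]; exact Set.mem_singleton k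
  set g := (e k : AIso F) with hg
  set h := (e l : AIso F) with hh
  refine ⟨g * h⁻¹, mul_mem (e k).2 (inv_mem (e l).2), ?_, ?_⟩
  · intro hcontra
    have : (e k : AIso F) = (e l : AIso F) := by
      have := mul_inv_eq_one.1 hcontra
      exact this
    have : e k = e l := Subtype.ext this
    exact hlk (e.injective this).symm
  · intro x
    have h1 : (g * h⁻¹).A x = g.A (h.A.symm x) := rfl
    rw [h1]
    have key := hS k hk l hlS (h.A.symm x)
    rw [h.A.apply_symm_apply, h.A.symm.norm_map] at key
    exact key

/-- a cocompact group of affine isometries of a nontrivial space is infinite -/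
lemma cocompact_infinite (G : Subgroup (AIso F))
    {R : ℝ} (hC : ∀ x : F, ∃ g ∈ G, ‖g.act x‖ ≤ R)
    (hdim : 1 ≤ Module.finrank ℝ F) :
    (G : Set (AIso F)).Infinite := by
  by_contra hinf
  rw [Set.not_infinite] at hinf
  have hfin := hinf
  -- bound on translation parts
  have himg : ((fun g : AIso F => ‖g.a‖) '' (G : Set (AIso F))).Finite := hfin.image _
  have hbdd : BddAbove ((fun g : AIso F => ‖g.a‖) '' (G : Set (AIso F))) := himg.bddAbove
  obtain ⟨M, hM⟩ := hbdd
  -- a unit vector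
  have : Nontrivial F := by
    have h0 : 0 < Module.finrank ℝ F := by omega
    exact Module.nontrivial_of_finrank_pos h0
  obtain ⟨x0, hx0⟩ := exists_ne (0 : F)
  set x : F := ((R + M + 1) * ‖x0‖⁻¹) • x0 with hx
  have hnx : ‖x‖ = |R + M + 1| := by
    rw [hx, norm_smul, Real.norm_eq_abs, abs_mul, abs_of_nonneg (inv_nonneg.2 (norm_nonneg x0)),
      mul_assoc, inv_mul_cancel₀ (norm_ne_zero_iff.2 hx0), mul_one]
  obtain ⟨g, hgG, hgle⟩ := hC x
  have hMg : ‖g.a‖ ≤ M := hM ⟨g, hgG, rfl⟩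
  have hMnn : 0 ≤ M := le_trans (norm_nonneg _) hMg
  have hRnn : 0 ≤ R := le_trans (norm_nonneg _) hgle
  have h1 : ‖g.act x‖ ≥ ‖g.A x‖ - ‖g.a‖ := by
    have h0 : ‖g.A x‖ = ‖g.a + g.A x - g.a‖ := by congr 1; abel
    have := norm_sub_le (g.a + g.A x) g.a
    rw [← h0] at this
    have hact : g.act x = g.a + g.A x := rfl
    rw [hact]; linarith
  have h2 : ‖g.A x‖ = ‖x‖ := g.A.norm_map x
  rw [hnx, abs_of_nonneg (by linarith)] at h2
  have : R + M + 1 - M ≤ ‖g.act x‖ := by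
    rw [← h2] at *
    have := h1
    nlinarith [h2]
  linarith

end AIso

end Part3
noncomputable section Part4

open Submodule Metric

variable {F : Type*} [NormedAddCommGroup F] [InnerProductSpace ℝ F]
  [FiniteDimensional ℝ F]

namespace AIso

set_option maxHeartbeats 1000000 in
lemma step_lemma (G : Subgroup (AIso F)) {u : AIso F} (huG : u ∈ G)
    (W : Submodule ℝ F) {δ : ℝ}
    (hδ0 : 0 < δ) (hδ1 : δ ≤ 1/100)
    (hB1 : Dle u.A (1/100))
    (hfix : ∀ v ∈ Wᗮ, u.A v = v)
    (hal : ∀ w ∈ W, δ * ‖w‖ ≤ ‖u.A w - w‖)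
    {γ : AIso F} (hγG : γ ∈ G) {ξ : ℝ}
    (hξ0 : 0 ≤ ξ) (hξ : ξ ≤ δ^2/100)
    (hXd : Dle γ.A ξ)
    (hfrac : ‖γ.a‖/2 ≤ ‖pj W γ.a‖)
    (hT : 100*(‖u.a‖+1)/δ ≤ ‖γ.a‖) :
    γ * u * γ⁻¹ * u⁻¹ ∈ G ∧ Dle (γ * u * γ⁻¹ * u⁻¹).A (ξ/50) ∧
    ‖(γ * u * γ⁻¹ * u⁻¹).a‖/2 ≤ ‖pj W (γ * u * γ⁻¹ * u⁻¹).a‖ ∧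
    (δ/4) * ‖γ.a‖ ≤ ‖(γ * u * γ⁻¹ * u⁻¹).a‖ ∧
    ‖(γ * u * γ⁻¹ * u⁻¹).a‖ ≤ ‖γ.a‖/2 := by
  have hmem : γ * u * γ⁻¹ * u⁻¹ ∈ G :=
    mul_mem (mul_mem (mul_mem hγG huG) (inv_mem hγG)) (inv_mem huG)
  have hrot : Dle (γ * u * γ⁻¹ * u⁻¹).A (ξ/50) := by
    intro z
    have h0 : (γ * u * γ⁻¹ * u⁻¹).A z = γ.A (u.A (γ.A.symm (u.A.symm z))) := rfl
    rw [h0]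
    have := dle_commutator hXd hB1 hξ0 (by norm_num) z
    calc ‖γ.A (u.A (γ.A.symm (u.A.symm z))) - z‖ ≤ 2 * ξ * (1/100) * ‖z‖ := this
      _ = ξ/50 * ‖z‖ := by ring
  -- notation
  set X := γ.A with hX
  set B := u.A with hB
  set c := γ.a with hc
  set b := u.a with hb
  set y : F := X.symm c with hy
  set z : F := B y - y with hz
  set E : F := X (b - B (X.symm (B.symm b))) with hE
  have hca : (γ * u * γ⁻¹ * u⁻¹).a = -(X z) + E := by
    rw [comm_a_eq]
  have hEb : ‖E‖ ≤ ξ * ‖b‖ := comm_a_second_bound hXd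
  have hyc : ‖y‖ = ‖c‖ := X.symm.norm_map c
  have hycd : ‖y - c‖ ≤ ξ * ‖c‖ := dle_symm hXd c
  obtain ⟨hzdec, hzW⟩ := diff_decomp hfix y
  have hpjy_mem : pj W y ∈ W := (orthogonalProjection W y).2
  have hzlow : δ * ‖pj W y‖ ≤ ‖z‖ := by
    rw [hz, hzdec]; exact hal _ hpjy_mem
  have hpjy : ‖pj W c‖ - ξ * ‖c‖ ≤ ‖pj W y‖ := by
    have h1 : ‖pj W c‖ - ‖pj W y‖ ≤ ‖pj W c - pj W y‖ := norm_sub_norm_le _ _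
    have h2 : ‖pj W c - pj W y‖ ≤ ‖c - y‖ := pj_lip W c y
    have h3 : ‖c - y‖ = ‖y - c‖ := norm_sub_rev c y
    linarith
  have hzup : ‖z‖ ≤ (1/100) * ‖c‖ := by
    have := hB1 y; rw [hyc] at this; exact this
  have hXz : ‖X z - z‖ ≤ ξ * ‖z‖ := hXd z
  -- norm bounds on c'
  have hcu : ‖(γ * u * γ⁻¹ * u⁻¹).a‖ ≤ ‖z‖ + ξ * ‖b‖ := by
    rw [hca]
    calc ‖-(X z) + E‖ ≤ ‖-(X z)‖ + ‖E‖ := norm_add_le _ _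
      _ = ‖z‖ + ‖E‖ := by rw [norm_neg, X.norm_map]
      _ ≤ ‖z‖ + ξ * ‖b‖ := by linarith
  have hcl : ‖z‖ - ξ * ‖b‖ ≤ ‖(γ * u * γ⁻¹ * u⁻¹).a‖ := by
    rw [hca]
    have h1 : ‖-(X z)‖ - ‖E‖ ≤ ‖-(X z) + E‖ := by
      have := norm_sub_le (-(X z) + E) E
      have h2 : -(X z) + E - E = -(X z) := by abel
      rw [h2] at this; linarith
    rw [norm_neg, X.norm_map] at h1; linarith
  -- projection bound
  have hpjc' : ‖z‖ - ξ * ‖z‖ - ξ * ‖b‖ ≤ ‖pj W (γ * u * γ⁻¹ * u⁻¹).a‖ := by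
    have h1 : ‖pj W (γ * u * γ⁻¹ * u⁻¹).a - (-z)‖ ≤ ξ * ‖z‖ + ξ * ‖b‖ := by
      have hpz : pj W (-z) = -z := pj_eq_self W (Submodule.neg_mem W hzW)
      have h2 : ‖pj W (γ * u * γ⁻¹ * u⁻¹).a - pj W (-(X z))‖ ≤ ‖E‖ := by
        have := pj_lip W ((γ * u * γ⁻¹ * u⁻¹).a) (-(X z))
        have h3 : (γ * u * γ⁻¹ * u⁻¹).a - (-(X z)) = E := by rw [hca]; abel
        rw [h3] at this; exact this
      have h4 : ‖pj W (-(X z)) - (-z)‖ ≤ ξ * ‖z‖ := by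
        rw [← hpz]
        have := pj_lip W (-(X z)) (-z)
        have h5 : -(X z) - (-z) = -(X z - z) := by abel
        rw [h5, norm_neg] at this
        exact this.trans hXz
      calc ‖pj W (γ * u * γ⁻¹ * u⁻¹).a - (-z)‖
          ≤ ‖pj W (γ * u * γ⁻¹ * u⁻¹).a - pj W (-(X z))‖ + ‖pj W (-(X z)) - (-z)‖ := by
            have := norm_sub_le_norm_sub_add_norm_sub
              (pj W (γ * u * γ⁻¹ * u⁻¹).a) (pj W (-(X z))) (-z)
            exact this
        _ ≤ ‖E‖ + ξ * ‖z‖ := add_le_add h2 h4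
        _ ≤ ξ * ‖z‖ + ξ * ‖b‖ := by linarith
    have h6 : ‖(-z : F)‖ - ‖pj W (γ * u * γ⁻¹ * u⁻¹).a‖ ≤
        ‖pj W (γ * u * γ⁻¹ * u⁻¹).a - (-z)‖ := by
      rw [norm_sub_rev]; exact norm_sub_norm_le _ _
    rw [norm_neg] at h6
    linarith
  -- numeric phase
  have hds : 100 * (‖b‖ + 1) ≤ δ * ‖c‖ := by
    rw [div_le_iff₀ hδ0] at hT
    nlinarith [hT]
  have hbnn : (0:ℝ) ≤ ‖b‖ := norm_nonneg _
  have hcnn : (0:ℝ) ≤ ‖c‖ := norm_nonneg _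
  have hznn : (0:ℝ) ≤ ‖z‖ := norm_nonneg _
  have d1 : ξ ≤ 1/1000000 := by nlinarith [mul_le_mul hδ1 hδ1 hδ0.le (by norm_num : (0:ℝ) ≤ 1/100)]
  have d2 : (49/100) * ‖c‖ ≤ ‖pj W y‖ := by nlinarith [hfrac, hpjy, mul_le_mul_of_nonneg_right d1 hcnn]
  have d3 : (49/100) * (δ * ‖c‖) ≤ ‖z‖ := by
    have := mul_le_mul_of_nonneg_left d2 hδ0.le
    nlinarith [hzlow]
  have d4 : 49 * (‖b‖+1) ≤ ‖z‖ := by nlinarith [d3, hds]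
  have d5 : ξ * ‖b‖ ≤ ‖b‖/1000000 := by nlinarith [mul_le_mul_of_nonneg_right d1 hbnn]
  have d6 : ξ * ‖z‖ ≤ ‖z‖/1000000 := by nlinarith [mul_le_mul_of_nonneg_right d1 hznn]
  have hδs : δ * ‖c‖ ≤ (1/100) * ‖c‖ := mul_le_mul_of_nonneg_right hδ1 hcnn
  set s' := ‖(γ * u * γ⁻¹ * u⁻¹).a‖ with hs'
  set Pc' := ‖pj W (γ * u * γ⁻¹ * u⁻¹).a‖ with hPc'
  set sN := ‖c‖ with hsN
  set βN := ‖b‖ with hβN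
  set ZN := ‖z‖ with hZN
  set PyN := ‖pj W y‖ with hPyN
  set PcN := ‖pj W c‖ with hPcN
  clear_value s' Pc' sN βN ZN PyN PcN
  clear hca hzdec hzW hyc hycd hXz hpjy_mem hy hz hE hX hB hc hb
  refine ⟨hmem, hrot, ?_, ?_, ?_⟩
  · -- fraction
    linarith [hpjc', hcu, d4, d5, d6, hbnn]
  · -- lower bound
    linarith [hcl, d3, d5, hds, hbnn]
  · -- upper bound
    linarith [hcu, hzup, d5, hds, hδs, hbnn]

end AIso

end Part4
noncomputable section Part5

open Submodule Metric

variable {F : Type*} [NormedAddCommGroup F] [InnerProductSpace ℝ F]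
  [FiniteDimensional ℝ F]

namespace AIso

lemma chain_lemma (G : Subgroup (AIso F)) {u : AIso F} (huG : u ∈ G)
    (W : Submodule ℝ F) {δ : ℝ}
    (hδ0 : 0 < δ) (hδ1 : δ ≤ 1/100)
    (hB1 : Dle u.A (1/100))
    (hfix : ∀ v ∈ Wᗮ, u.A v = v)
    (hal : ∀ w ∈ W, δ * ‖w‖ ≤ ‖u.A w - w‖)
    {v : AIso F} (hvG : v ∈ G) {ξ0 : ℝ} (hξ00 : 0 ≤ ξ0) (hξ0le : ξ0 ≤ δ^2/100)
    (hvD : Dle v.A ξ0) (hvfrac : ‖v.a‖/2 ≤ ‖pj W v.a‖)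
    (m : ℕ) (hbig : (100*(‖u.a‖+1)/δ) * (4/δ)^m ≤ ‖v.a‖) :
    ∃ ω ∈ G, Dle ω.A (ξ0 / 50^m) ∧
      (δ/4) * (100*(‖u.a‖+1)/δ) ≤ ‖ω.a‖ ∧ ‖ω.a‖ ≤ 100*(‖u.a‖+1)/δ := by
  set T : ℝ := 100*(‖u.a‖+1)/δ with hTdef
  have hT0 : 0 < T := by
    apply div_pos
    · nlinarith [norm_nonneg u.a]
    · exact hδ0
  -- the chain
  set γ : ℕ → AIso F := fun j => Nat.rec v (fun _ g => g * u * g⁻¹ * u⁻¹) j with hγ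
  have hγ0 : γ 0 = v := rfl
  have hγs : ∀ j, γ (j+1) = γ j * u * (γ j)⁻¹ * u⁻¹ := fun j => rfl
  -- invariants
  have inv : ∀ j : ℕ, (∀ i < j, T ≤ ‖(γ i).a‖) →
      (γ j ∈ G ∧ Dle (γ j).A (ξ0/50^j) ∧ ‖(γ j).a‖/2 ≤ ‖pj W (γ j).a‖ ∧
       ‖(γ j).a‖ ≤ ‖v.a‖ / 2^j ∧ (δ/4)^j * ‖v.a‖ ≤ ‖(γ j).a‖) := by
    intro j
    induction j with
    | zero =>
      intro _
      refine ⟨hvG, ?_, hvfrac, by simp [hγ0], by simp [hγ0]⟩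
      simpa [hγ0] using hvD
    | succ j ih =>
      intro hbig'
      have hprev := ih (fun i hi => hbig' i (Nat.lt_succ_of_lt hi))
      obtain ⟨hmem, hD, hfr, hup, hlo⟩ := hprev
      have hTj : T ≤ ‖(γ j).a‖ := hbig' j (Nat.lt_succ_self j)
      have hξj0 : (0:ℝ) ≤ ξ0/50^j := by positivity
      have hξjle : ξ0/50^j ≤ δ^2/100 := by
        have h1 : (1:ℝ) ≤ 50^j := one_le_pow₀ (by norm_num)
        calc ξ0/50^j ≤ ξ0/1 := by
              apply div_le_div_of_nonneg_left hξ00 (by norm_num) h1  -- might need care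
          _ = ξ0 := by ring
          _ ≤ δ^2/100 := hξ0le
      have hstep := step_lemma G huG W hδ0 hδ1 hB1 hfix hal hmem hξj0 hξjle hD hfr hTj
      obtain ⟨smem, sD, sfr, slo, sup⟩ := hstep
      rw [← hγs j] at smem sD sfr slo sup
      refine ⟨smem, ?_, sfr, ?_, ?_⟩
      · have : ξ0/50^j/50 = ξ0/50^(j+1) := by
          rw [div_div, ← pow_succ]
        rwa [this] at sD
      · calc ‖(γ (j+1)).a‖ ≤ ‖(γ j).a‖/2 := sup
          _ ≤ (‖v.a‖/2^j)/2 := by linarith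
          _ = ‖v.a‖/2^(j+1) := by rw [pow_succ]; ring
      · calc (δ/4)^(j+1) * ‖v.a‖ = (δ/4) * ((δ/4)^j * ‖v.a‖) := by rw [pow_succ]; ring
          _ ≤ (δ/4) * ‖(γ j).a‖ := by
              apply mul_le_mul_of_nonneg_left hlo (by positivity)
          _ ≤ ‖(γ (j+1)).a‖ := slo
  -- the stopping time
  have hM : {j : ℕ | ‖(γ j).a‖ < T}.Nonempty := by
    by_contra hemp
    rw [Set.not_nonempty_iff_eq_empty] at hemp
    have hall : ∀ j : ℕ, T ≤ ‖(γ j).a‖ := by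
      intro j
      by_contra hlt
      push_neg at hlt
      have : j ∈ {j : ℕ | ‖(γ j).a‖ < T} := hlt
      rw [hemp] at this
      exact this
    obtain ⟨j, hj⟩ := pow_unbounded_of_one_lt (‖v.a‖/T) (by norm_num : (1:ℝ) < 2)
    have hinvj := inv j (fun i _ => hall i)
    have h1 : ‖(γ j).a‖ ≤ ‖v.a‖/2^j := hinvj.2.2.2.1
    have h2 : ‖v.a‖/2^j < T := by
      rw [div_lt_iff₀ (by positivity : (0:ℝ) < 2^j)]
      rw [div_lt_iff₀ hT0] at hj
      linarith
    linarith [hall j]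
  set J : ℕ := sInf {j : ℕ | ‖(γ j).a‖ < T} with hJdef
  have hJmem : ‖(γ J).a‖ < T := Nat.sInf_mem hM
  have hJlt : ∀ i < J, T ≤ ‖(γ i).a‖ := by
    intro i hi
    have : i ∉ {j : ℕ | ‖(γ j).a‖ < T} := Nat.notMem_of_lt_sInf hi
    exact le_of_not_gt this
  have hinvJ := inv J hJlt
  obtain ⟨hmemJ, hDJ, _, _, hloJ⟩ := hinvJ
  -- J > m
  have hmJ : m < J := by
    by_contra hle
    push_neg at hle
    have h1 : (δ/4)^J * ‖v.a‖ ≤ ‖(γ J).a‖ := hloJ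
    have h2 : T * (4/δ)^m ≤ ‖v.a‖ := hbig
    have h3 : (4:ℝ)/δ ≥ 1 := by
      rw [ge_iff_le, le_div_iff₀ hδ0]; linarith
    have h4 : (δ/4)^J * ((4/δ)^m) ≥ 1 := by
      have hJm : (4/δ)^m = (4/δ)^J * (4/δ)^(m - J) := by
        rw [← pow_add]
        congr 1
        omega
      have h5 : (δ/4)^J * (4/δ)^J = 1 := by
        rw [← mul_pow]
        have : (δ/4) * (4/δ) = 1 := by field_simp
        rw [this, one_pow]
      rw [hJm, ← mul_assoc, h5, one_mul]
      exact one_le_pow₀ h3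
    have h6 : T ≤ (δ/4)^J * ‖v.a‖ := by
      calc T = T * 1 := by ring
        _ ≤ T * ((δ/4)^J * (4/δ)^m) := by nlinarith
        _ = (δ/4)^J * (T * (4/δ)^m) := by ring
        _ ≤ (δ/4)^J * ‖v.a‖ := by
            apply mul_le_mul_of_nonneg_left h2 (by positivity)
    linarith
  -- final window lower bound
  have hJ1 : 1 ≤ J := by omega
  obtain ⟨K, hK⟩ : ∃ K, J = K + 1 := ⟨J - 1, by omega⟩
  have hKlt : ∀ i < K, T ≤ ‖(γ i).a‖ := fun i hi => hJlt i (by omega)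
  have hinvK := inv K hKlt
  obtain ⟨hmemK, hDK, hfrK, _, _⟩ := hinvK
  have hTK : T ≤ ‖(γ K).a‖ := hJlt K (by omega)
  have hξK0 : (0:ℝ) ≤ ξ0/50^K := by positivity
  have hξKle : ξ0/50^K ≤ δ^2/100 := by
    have h1 : (1:ℝ) ≤ 50^K := one_le_pow₀ (by norm_num)
    calc ξ0/50^K ≤ ξ0/1 := by
          apply div_le_div_of_nonneg_left hξ00 (by norm_num) h1
      _ = ξ0 := by ring
      _ ≤ δ^2/100 := hξ0le
  have hstepK := step_lemma G huG W hδ0 hδ1 hB1 hfix hal hmemK hξK0 hξKle hDK hfrK hTK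
  have hlowJ : (δ/4) * T ≤ ‖(γ J).a‖ := by
    have := hstepK.2.2.2.1
    rw [← hγs K, ← hK] at this
    calc (δ/4) * T ≤ (δ/4) * ‖(γ K).a‖ := by
          apply mul_le_mul_of_nonneg_left hTK (by positivity)
      _ ≤ ‖(γ J).a‖ := this
  refine ⟨γ J, hmemJ, ?_, hlowJ, hJmem.le⟩
  apply hDJ.mono
  apply div_le_div_of_nonneg_left hξ00 (by positivity)
  exact pow_le_pow_right₀ (by norm_num) hmJ.le

end AIso

end Part5
noncomputable section Part6

open Submodule Metric

variable {F : Type*} [NormedAddCommGroup F] [InnerProductSpace ℝ F]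
  [FiniteDimensional ℝ F]

namespace AIso

/-- decomposition of the translation part of a conjugate -/
lemma conj_a_decomp (h u : AIso F) (x : F) :
    (h * u * h⁻¹).a
      = h.A (u.A x - x) + (h.act x + h.A u.a - h.A (u.A (h.A.symm (h.act x)))) := by
  simp only [mul_a, inv_a, mul_A, act, LinearIsometryEquiv.trans_apply, map_sub, map_add,
    map_neg, LinearIsometryEquiv.apply_symm_apply, LinearIsometryEquiv.symm_apply_apply]
  abel

lemma conj_a_rem_bound (h u : AIso F) (x : F) (R : ℝ) (hact : ‖h.act x‖ ≤ R) :
    ‖h.act x + h.A u.a - h.A (u.A (h.A.symm (h.act x)))‖ ≤ 2*R + ‖u.a‖ := by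
  have h1 : ‖h.A u.a‖ = ‖u.a‖ := h.A.norm_map _
  have h2 : ‖h.A (u.A (h.A.symm (h.act x)))‖ = ‖h.act x‖ := by
    rw [h.A.norm_map, u.A.norm_map, h.A.symm.norm_map]
  calc ‖h.act x + h.A u.a - h.A (u.A (h.A.symm (h.act x)))‖
      ≤ ‖h.act x + h.A u.a‖ + ‖h.A (u.A (h.A.symm (h.act x)))‖ := norm_sub_le _ _
    _ ≤ ‖h.act x‖ + ‖h.A u.a‖ + ‖h.A (u.A (h.A.symm (h.act x)))‖ := by
        linarith [norm_add_le (h.act x) (h.A u.a)]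
    _ ≤ 2*R + ‖u.a‖ := by rw [h1, h2]; linarith

set_option maxHeartbeats 2000000 in
/-- **Key lemma**: a "discrete" cocompact group of affine isometries of a nontrivial
finite-dimensional inner product space contains a nontrivial translation. -/
lemma exists_translation (G : Subgroup (AIso F))
    (hF : ∀ r : ℝ, {g : AIso F | g ∈ G ∧ ‖g.a‖ ≤ r}.Finite)
    {R : ℝ} (hC : ∀ x : F, ∃ g ∈ G, ‖g.act x‖ ≤ R)
    (hdim : 1 ≤ Module.finrank ℝ F) :
    ∃ g ∈ G, g.A = LinearIsometryEquiv.refl ℝ F ∧ g.a ≠ 0 := by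
  by_contra hcon
  push_neg at hcon
  have Htr : ∀ g ∈ G, g.A = LinearIsometryEquiv.refl ℝ F → g.a = 0 := by
    intro g hg hA
    exact hcon g hg hA
  have hGinf : (G : Set (AIso F)).Infinite := cocompact_infinite G hC hdim
  obtain ⟨u, huG, hune, huD⟩ := small_elements G hGinf Htr (by norm_num : (0:ℝ) < 1/100)
  have huAne : u.A ≠ LinearIsometryEquiv.refl ℝ F := by
    intro hA
    apply hune
    have := Htr u huG hA
    exact AIso.ext this hA
  obtain ⟨W, δ, hδ0, hδ1, hfix, hal, hWne⟩ := exists_delta huAne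
  -- a unit vector in W
  obtain ⟨e0, he0⟩ := Submodule.ne_bot_iff W |>.1 hWne
  set e : F := (‖e0‖⁻¹ : ℝ) • e0 with hedef
  have heW : e ∈ W := Submodule.smul_mem W _ he0.1
  have hene : ‖e‖ = 1 := by
    rw [hedef, norm_smul, Real.norm_eq_abs, abs_of_nonneg (inv_nonneg.2 (norm_nonneg e0))]
    exact inv_mul_cancel₀ (norm_ne_zero_iff.2 he0.2)
  -- cocompactness data
  choose hh hhG hhb using fun k : ℕ => hC ((k:ℝ) • e)
  set H : ℕ → (F ≃ₗᵢ[ℝ] F) := fun k => (hh k).A with hHdef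
  set η : ℝ := δ^2/400 with hηdef
  have hη0 : 0 < η := by positivity
  obtain ⟨S, hSinf, hS⟩ := pigeon H hη0
  obtain ⟨k0, hk0S⟩ := hSinf.nonempty
  set w : AIso F := hh k0 * u * (hh k0)⁻¹ with hwdef
  have hwG : w ∈ G := mul_mem (mul_mem (hhG k0) huG) (inv_mem (hhG k0))
  have hwA : ∀ x, w.A x = H k0 (u.A ((H k0).symm x)) := fun x => rfl
  -- step hypotheses for (w, W*)
  set Wstar : Submodule ℝ F := W.map ((H k0).toLinearEquiv.toLinearMap) with hWs
  have hmemWs : ∀ x : F, x ∈ Wstar ↔ ∃ y ∈ W, H k0 y = x := by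
    intro x
    rw [hWs, Submodule.mem_map]
    rfl
  have hB1s : Dle w.A (1/100) := by
    intro x
    rw [hwA]
    have h1 : x = H k0 ((H k0).symm x) := ((H k0).apply_symm_apply x).symm
    calc ‖H k0 (u.A ((H k0).symm x)) - x‖
        = ‖H k0 (u.A ((H k0).symm x)) - H k0 ((H k0).symm x)‖ := by rw [← h1]
      _ = ‖u.A ((H k0).symm x) - (H k0).symm x‖ := by rw [← map_sub, (H k0).norm_map]
      _ ≤ (1/100) * ‖(H k0).symm x‖ := huD _
      _ = (1/100) * ‖x‖ := by rw [(H k0).symm.norm_map]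
  have hfixs : ∀ v ∈ Wstarᗮ, w.A v = v := by
    intro v hv
    have h1 : (H k0).symm v ∈ Wᗮ := by
      rw [Submodule.mem_orthogonal]
      intro y hy
      have h2 : (H k0) y ∈ Wstar := (hmemWs _).2 ⟨y, hy, rfl⟩
      have h3 := (Submodule.mem_orthogonal Wstar v).1 hv _ h2
      calc (inner ℝ y ((H k0).symm v) : ℝ)
          = inner ℝ (H k0 y) (H k0 ((H k0).symm v)) := ((H k0).inner_map_map _ _).symm
        _ = inner ℝ (H k0 y) v := by rw [(H k0).apply_symm_apply]
        _ = 0 := h3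
    rw [hwA, hfix _ h1, (H k0).apply_symm_apply]
  have hals : ∀ x ∈ Wstar, δ * ‖x‖ ≤ ‖w.A x - x‖ := by
    intro x hx
    obtain ⟨y, hy, hyx⟩ := (hmemWs x).1 hx
    rw [hwA, ← hyx, (H k0).symm_apply_apply, ← map_sub, (H k0).norm_map, (H k0).norm_map]
    exact hal y hy
  -- constants
  set ρ : ℝ := 2*R + ‖u.a‖ with hρdef
  set β : ℝ := ‖w.a‖ with hβdef
  set T : ℝ := 100*(β+1)/δ with hTdef
  have hR0 : 0 ≤ R := le_trans (norm_nonneg _) (hhb 0)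
  have hρ0 : 0 ≤ ρ := by rw [hρdef]; positivity
  have hβ0 : 0 ≤ β := norm_nonneg _
  have hT0 : 0 < T := by rw [hTdef]; positivity
  set z0 : F := u.A e - e with hz0def
  have hz0W : z0 ∈ W := (diff_decomp hfix e).2
  set σ : ℝ := ‖z0‖ with hσdef
  have hσδ : δ ≤ σ := by
    have := hal e heW
    rwa [hene, mul_one] at this
  have hσup : σ ≤ 1/100 := by
    have := huD e
    rwa [hene, mul_one] at this
  -- decomposition of the translation parts of the conjugates
  have hconj : ∀ k : ℕ, (hh k * u * (hh k)⁻¹).a = (k:ℝ) • (H k z0) +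
      ((hh k).act ((k:ℝ) • e) + H k u.a -
        H k (u.A ((H k).symm ((hh k).act ((k:ℝ) • e))))) := by
    intro k
    have hthis := conj_a_decomp (hh k) u ((k:ℝ) • e)
    rw [hthis]
    congr 1
    have h1 : u.A ((k:ℝ) • e) - (k:ℝ) • e = (k:ℝ) • z0 := by
      rw [map_smul, hz0def, smul_sub]
    rw [h1, map_smul]
  have hrem : ∀ k : ℕ, ‖(hh k).act ((k:ℝ) • e) + H k u.a -
      H k (u.A ((H k).symm ((hh k).act ((k:ℝ) • e))))‖ ≤ ρ :=
    fun k => conj_a_rem_bound (hh k) u _ R (hhb k)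
  -- starting elements: for every m there is one
  have hstart : ∀ m : ℕ, ∃ v ∈ G, Dle v.A (2*η) ∧ ‖v.a‖/2 ≤ ‖pj Wstar v.a‖ ∧
      T * (4/δ)^m ≤ ‖v.a‖ := by
    intro m
    -- choose k ∈ S large
    obtain ⟨k, hkS, hk⟩ := hSinf.exists_gt (k0 + 1 + Nat.ceil ((2/δ) * (T*(4/δ)^m + 7*(ρ+β) + 1)))
    have hkbig : (2/δ) * (T*(4/δ)^m + 7*(ρ+β) + 1) ≤ (k:ℝ) := by
      have h1 : ((k0 + 1 + Nat.ceil ((2/δ) * (T*(4/δ)^m + 7*(ρ+β) + 1)) : ℕ) : ℝ) ≤ k := by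
        exact_mod_cast hk.le
      have h2 := Nat.le_ceil ((2/δ) * (T*(4/δ)^m + 7*(ρ+β) + 1))
      push_cast at h1
      linarith
    set g : AIso F := hh k * u * (hh k)⁻¹ with hgdef
    have hgG : g ∈ G := mul_mem (mul_mem (hhG k) huG) (inv_mem (hhG k))
    set v : AIso F := g * w⁻¹ with hvdef
    have hvG : v ∈ G := mul_mem hgG (inv_mem hwG)
    -- rotation estimate
    have hvD : Dle v.A (2*η) := by
      intro x
      obtain ⟨y, rfl⟩ : ∃ y, w.A y = x := ⟨w.A.symm x, w.A.apply_symm_apply x⟩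
      have h1 : v.A (w.A y) = g.A y := by
        show g.A (w.A.symm (w.A y)) = g.A y
        rw [w.A.symm_apply_apply]
      rw [h1, w.A.norm_map]
      have hgA : ∀ t, g.A t = H k (u.A ((H k).symm t)) := fun t => rfl
      rw [hgA, hwA]
      set p : F := u.A ((H k).symm y) with hpdef
      set q : F := u.A ((H k0).symm y) with hqdef
      show ‖H k p - H k0 q‖ ≤ 2*η*‖y‖
      have e1 : ‖H k p - H k0 p‖ ≤ η * ‖p‖ := hS k hkS k0 hk0S p
      have e2 : ‖H k0 p - H k0 q‖ = ‖p - q‖ := by rw [← map_sub, (H k0).norm_map]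
      have e3 : ‖p - q‖ = ‖(H k).symm y - (H k0).symm y‖ := by
        rw [hpdef, hqdef, ← map_sub, u.A.norm_map]
      have e4 : ‖(H k).symm y - (H k0).symm y‖ ≤ η * ‖y‖ := by
        have e5 : ‖(H k) ((H k).symm y - (H k0).symm y)‖
            = ‖(H k).symm y - (H k0).symm y‖ := (H k).norm_map _
        rw [← e5, map_sub, (H k).apply_symm_apply]
        have e6 : ‖H k0 ((H k0).symm y) - H k ((H k0).symm y)‖ ≤ η * ‖(H k0).symm y‖ :=
          hS k0 hk0S k hkS _
        rw [(H k0).apply_symm_apply, (H k0).symm.norm_map] at e6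
        calc ‖y - H k ((H k0).symm y)‖ = ‖y - H k ((H k0).symm y)‖ := rfl
          _ ≤ η * ‖y‖ := e6
      have hnp : ‖p‖ = ‖y‖ := by rw [hpdef, u.A.norm_map, (H k).symm.norm_map]
      calc ‖H k p - H k0 q‖ ≤ ‖H k p - H k0 p‖ + ‖H k0 p - H k0 q‖ :=
            norm_sub_le_norm_sub_add_norm_sub _ _ _
        _ ≤ η * ‖p‖ + ‖p - q‖ := by rw [e2]; linarith
        _ ≤ η * ‖y‖ + η * ‖y‖ := by rw [hnp]; rw [e3]; linarith [e4]
        _ = 2*η * ‖y‖ := by ring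
    -- translation estimate
    have hva : v.a = g.a - g.A (w.A.symm w.a) := by
      rw [hvdef, mul_a, inv_a, map_neg]
      abel
    have hsecond : ‖g.A (w.A.symm w.a)‖ = β := by
      rw [g.A.norm_map, w.A.symm.norm_map]
    set wtarget : F := (k:ℝ) • (H k0 z0) with hwt
    have hwtW : wtarget ∈ Wstar := by
      apply Submodule.smul_mem
      exact (hmemWs _).2 ⟨z0, hz0W, rfl⟩
    have hdist : ‖v.a - wtarget‖ ≤ (k:ℝ)*η*σ + (ρ + β) := by
      have h1 : v.a - wtarget = ((k:ℝ) • (H k z0) - (k:ℝ) • (H k0 z0)) +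
          (((hh k).act ((k:ℝ) • e) + H k u.a -
            H k (u.A ((H k).symm ((hh k).act ((k:ℝ) • e))))) - g.A (w.A.symm w.a)) := by
        rw [hva, hgdef, hconj k]
        abel
      rw [h1]
      have h2 : ‖(k:ℝ) • (H k z0) - (k:ℝ) • (H k0 z0)‖ ≤ (k:ℝ)*η*σ := by
        rw [← smul_sub, norm_smul, Real.norm_eq_abs, abs_of_nonneg (Nat.cast_nonneg k)]
        have := hS k hkS k0 hk0S z0
        calc (k:ℝ) * ‖H k z0 - H k0 z0‖ ≤ (k:ℝ) * (η * σ) := by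
              apply mul_le_mul_of_nonneg_left _ (Nat.cast_nonneg k)
              rw [hσdef]; exact this
          _ = (k:ℝ)*η*σ := by ring
      have h3 : ‖((hh k).act ((k:ℝ) • e) + H k u.a -
          H k (u.A ((H k).symm ((hh k).act ((k:ℝ) • e))))) - g.A (w.A.symm w.a)‖
          ≤ ρ + β := by
        calc ‖_ - g.A (w.A.symm w.a)‖ ≤ ‖_‖ + ‖g.A (w.A.symm w.a)‖ := norm_sub_le _ _
          _ ≤ ρ + β := by rw [hsecond]; linarith [hrem k]
      calc ‖_ + _‖ ≤ ‖_‖ + ‖_‖ := norm_add_le _ _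
        _ ≤ (k:ℝ)*η*σ + (ρ + β) := add_le_add h2 h3
    have hwtnorm : ‖wtarget‖ = (k:ℝ) * σ := by
      rw [hwt, norm_smul, Real.norm_eq_abs, abs_of_nonneg (Nat.cast_nonneg k),
        (H k0).norm_map]
    -- now the numeric conclusion
    have hpjlow : (k:ℝ)*σ - ((k:ℝ)*η*σ + (ρ+β)) ≤ ‖pj Wstar v.a‖ := by
      have h1 : ‖pj Wstar v.a - wtarget‖ ≤ (k:ℝ)*η*σ + (ρ+β) := by
        rw [← pj_eq_self Wstar hwtW]
        exact (pj_lip Wstar v.a wtarget).trans hdist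
      have h2 : ‖wtarget‖ - ‖pj Wstar v.a‖ ≤ ‖pj Wstar v.a - wtarget‖ := by
        rw [norm_sub_rev]; exact norm_sub_norm_le _ _
      rw [hwtnorm] at h2
      linarith
    have hvup : ‖v.a‖ ≤ (k:ℝ)*σ + ((k:ℝ)*η*σ + (ρ+β)) := by
      have h2 : ‖v.a‖ - ‖wtarget‖ ≤ ‖v.a - wtarget‖ := norm_sub_norm_le _ _
      rw [hwtnorm] at h2
      linarith
    have hvlow : (k:ℝ)*σ - ((k:ℝ)*η*σ + (ρ+β)) ≤ ‖v.a‖ := by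
      have h2 : ‖wtarget‖ - ‖v.a‖ ≤ ‖v.a - wtarget‖ := by
        rw [norm_sub_rev]; exact norm_sub_norm_le _ _
      rw [hwtnorm] at h2
      linarith
    have hηsmall : η ≤ 1/6 := by rw [hηdef]; nlinarith
    have hkσ : (k:ℝ)*δ ≤ (k:ℝ)*σ := mul_le_mul_of_nonneg_left hσδ (Nat.cast_nonneg k)
    have hkδbig : 2*(T*(4/δ)^m + 7*(ρ+β) + 1) ≤ (k:ℝ)*δ := by
      calc 2*(T*(4/δ)^m + 7*(ρ+β) + 1)
          = ((2/δ) * (T*(4/δ)^m + 7*(ρ+β) + 1)) * δ := by field_simp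
        _ ≤ (k:ℝ) * δ := mul_le_mul_of_nonneg_right hkbig hδ0.le
    have hησ : (k:ℝ)*η*σ ≤ (k:ℝ)*σ/6 := by
      nlinarith [mul_nonneg (Nat.cast_nonneg k : (0:ℝ) ≤ k) (norm_nonneg z0)]
    have hTpow : (0:ℝ) ≤ T*(4/δ)^m := by positivity
    refine ⟨v, hvG, hvD, ?_, ?_⟩
    · -- fraction
      linarith [hpjlow, hvup, hησ, hkσ, hkδbig, hρ0, hβ0, hTpow]
    · -- size
      linarith [hvlow, hησ, hkσ, hkδbig, hρ0, hβ0, hTpow]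
  -- apply the chain lemma for every m
  have hωm : ∀ m : ℕ, ∃ ω ∈ G, Dle ω.A ((2*η) / 50^m) ∧
      (δ/4) * T ≤ ‖ω.a‖ ∧ ‖ω.a‖ ≤ T := by
    intro m
    obtain ⟨v, hvG, hvD, hvfrac, hvsize⟩ := hstart m
    have hξle : 2*η ≤ δ^2/100 := by rw [hηdef]; linarith [sq_nonneg δ]
    exact chain_lemma G hwG Wstar hδ0 hδ1 hB1s hfixs hals hvG
      (by positivity) hξle hvD hvfrac m hvsize
  -- finiteness and conclusion
  choose Ω hΩG hΩD hΩlow hΩup using hωm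
  have hfin : {g : AIso F | g ∈ G ∧ ‖g.a‖ ≤ T}.Finite := hF T
  have hmap : ∀ m : ℕ, Ω m ∈ {g : AIso F | g ∈ G ∧ ‖g.a‖ ≤ T} := fun m => ⟨hΩG m, hΩup m⟩
  haveI : Finite {g : AIso F | g ∈ G ∧ ‖g.a‖ ≤ T} := hfin.to_subtype
  obtain ⟨gstar, hgstar⟩ := Finite.exists_infinite_fiber
    (fun m : ℕ => (⟨Ω m, hmap m⟩ : {g : AIso F | g ∈ G ∧ ‖g.a‖ ≤ T}))
  rw [Set.infinite_coe_iff] at hgstar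
  set M : Set ℕ := {m | (⟨Ω m, hmap m⟩ : {g : AIso F | g ∈ G ∧ ‖g.a‖ ≤ T}) = gstar}
    with hMdef
  have hMinf : M.Infinite := hgstar
  have hMeq : ∀ m ∈ M, Ω m = (gstar : AIso F) := by
    intro m hm
    exact congrArg Subtype.val hm
  obtain ⟨m1, hm1⟩ := hMinf.nonempty
  have hgG : (gstar : AIso F) ∈ G := gstar.2.1
  have hgane : (gstar : AIso F).a ≠ 0 := by
    intro h0
    have := hΩlow m1
    rw [hMeq m1 hm1, h0] at this
    simp at this
    nlinarith [this, hδ0, hT0]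
  have hgA : (gstar : AIso F).A = LinearIsometryEquiv.refl ℝ F := by
    ext x
    have hle : ∀ m ∈ M, ‖(gstar : AIso F).A x - x‖ ≤ (2*η)/50^m * ‖x‖ := by
      intro m hm
      have := hΩD m x
      rwa [hMeq m hm] at this
    have hzero : ‖(gstar : AIso F).A x - x‖ ≤ 0 := by
      by_contra hpos
      push_neg at hpos
      obtain ⟨m0, hm0⟩ := pow_unbounded_of_one_lt ((2*η) * ‖x‖ / ‖(gstar : AIso F).A x - x‖)
        (by norm_num : (1:ℝ) < 50)
      obtain ⟨m, hmM, hmgt⟩ := hMinf.exists_gt m0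
      have h1 := hle m hmM
      have h2 : (50:ℝ)^m0 ≤ 50^m := pow_le_pow_right₀ (by norm_num) hmgt.le
      have h3 : (2*η) * ‖x‖ / ‖(gstar : AIso F).A x - x‖ < 50^m := lt_of_lt_of_le hm0 h2
      rw [div_lt_iff₀ hpos] at h3
      have h4 : (2*η)/50^m * ‖x‖ < ‖(gstar : AIso F).A x - x‖ := by
        rw [div_mul_eq_mul_div, div_lt_iff₀ (by positivity : (0:ℝ) < 50^m)]
        linarith
      linarith
    have := norm_nonneg ((gstar : AIso F).A x - x)
    have hnz : ‖(gstar : AIso F).A x - x‖ = 0 := le_antisymm hzero this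
    have := norm_eq_zero.1 hnz
    have h5 : (gstar : AIso F).A x = x := by
      have := sub_eq_zero.1 this
      exact this
    simpa using h5
  exact hgane (Htr _ hgG hgA)

end AIso

end Part6
noncomputable section Part7

open Submodule Metric

variable {F : Type*} [NormedAddCommGroup F] [InnerProductSpace ℝ F]
  [FiniteDimensional ℝ F]

namespace AIso

variable (G : Subgroup (AIso F))

/-- the translation vectors of `G`, as an additive subgroup -/
def transGrp : AddSubgroup F where
  carrier := {a : F | AIso.trans a ∈ G}
  add_mem' := by
    intro a b ha hb
    have ha' : AIso.trans a ∈ G := ha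
    have hb' : AIso.trans b ∈ G := hb
    have := mul_mem ha' hb'
    rwa [trans_mul_trans] at this
  zero_mem' := by
    show AIso.trans 0 ∈ G
    rw [trans_zero]; exact one_mem G
  neg_mem' := by
    intro a ha
    have ha' : AIso.trans a ∈ G := ha
    have := inv_mem ha'
    rwa [trans_inv] at this

lemma transGrp_mem {a : F} : a ∈ transGrp G ↔ AIso.trans a ∈ G := Iff.rfl

lemma A_maps_L {g : AIso F} (hg : g ∈ G) {b : F} (hb : b ∈ transGrp G) :
    g.A b ∈ transGrp G := by
  rw [transGrp_mem]
  have := mul_mem (mul_mem hg (transGrp_mem G |>.1 hb)) (inv_mem hg)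
  rwa [conj_trans] at this

/-- `V₀`: the span of the translation vectors. -/
def spanT : Submodule ℝ F := Submodule.span ℝ (transGrp G : Set F)

lemma A_maps_spanT {g : AIso F} (hg : g ∈ G) {v : F} (hv : v ∈ spanT G) :
    g.A v ∈ spanT G := by
  induction hv using Submodule.span_induction with
  | mem x hx => exact Submodule.subset_span (A_maps_L G hg hx)
  | zero => rw [map_zero]; exact Submodule.zero_mem _
  | add x y _ _ hx hy => rw [map_add]; exact Submodule.add_mem _ hx hy
  | smul c x _ hx => rw [map_smul]; exact Submodule.smul_mem _ c hx

lemma A_maps_spanT_perp {g : AIso F} (hg : g ∈ G) {v : F} (hv : v ∈ (spanT G)ᗮ) :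
    g.A v ∈ (spanT G)ᗮ := by
  rw [Submodule.mem_orthogonal]
  intro y hy
  have h1 : g.A.symm y ∈ spanT G := by
    have : (g⁻¹).A y ∈ spanT G := A_maps_spanT G (inv_mem hg) hy
    exact this
  calc (inner ℝ y (g.A v) : ℝ) = inner ℝ (g.A (g.A.symm y)) (g.A v) := by
        rw [g.A.apply_symm_apply]
    _ = inner ℝ (g.A.symm y) v := g.A.inner_map_map _ _
    _ = 0 := (Submodule.mem_orthogonal (spanT G) v).1 hv _ h1

/-- lattice reduction: any element of the span is within a bounded distance of a
lattice point. -/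
lemma exists_reduction : ∃ C : ℝ, 0 ≤ C ∧
    (∀ v ∈ spanT G, ∃ l ∈ transGrp G, ‖v - l‖ ≤ C) ∧
    (∃ b : Set F, b ⊆ (transGrp G : Set F) ∧ b.Finite ∧
      Submodule.span ℝ b = spanT G ∧ ∀ x ∈ b, ‖x‖ ≤ C) := by
  obtain ⟨b, hbL, hbspan, hbind⟩ := exists_linearIndependent ℝ (transGrp G : Set F)
  have hbfin : b.Finite := hbind.setFinite
  set bF : Finset F := hbfin.toFinset with hbF
  set C : ℝ := ∑ x ∈ bF, ‖x‖ with hC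
  have hC0 : 0 ≤ C := Finset.sum_nonneg (fun x _ => norm_nonneg x)
  have hnorm_le : ∀ x ∈ b, ‖x‖ ≤ C := by
    intro x hx
    rw [hC]
    apply Finset.single_le_sum (f := fun x => ‖x‖) (fun y _ => norm_nonneg y)
    rw [hbF, Set.Finite.mem_toFinset]
    exact hx
  refine ⟨C, hC0, ?_, ⟨b, hbL, hbfin, hbspan, hnorm_le⟩⟩
  intro v hv
  have hv' : v ∈ Submodule.span ℝ b := by rw [hbspan]; exact hv
  rw [mem_span_set] at hv'
  obtain ⟨c, hcsupp, hcsum⟩ := hv'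
  set l : F := ∑ x ∈ c.support, (⌊c x⌋ : ℝ) • x with hl
  have hlL : l ∈ transGrp G := by
    rw [hl]
    apply AddSubgroup.sum_mem
    intro x hx
    have hxL : x ∈ transGrp G := hbL (hcsupp hx)
    have h1 : (⌊c x⌋ : ℤ) • x ∈ transGrp G := AddSubgroup.zsmul_mem _ hxL _
    have h2 : ((⌊c x⌋ : ℤ) : ℝ) • x = (⌊c x⌋ : ℤ) • x := Int.cast_smul_eq_zsmul ℝ _ _
    rw [h2]
    exact h1
  refine ⟨l, hlL, ?_⟩
  have hveq : v = ∑ x ∈ c.support, (c x) • x := by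
    rw [← hcsum]
    rfl
  have hdiff : v - l = ∑ x ∈ c.support, Int.fract (c x) • x := by
    rw [hveq, hl, ← Finset.sum_sub_distrib]
    apply Finset.sum_congr rfl
    intro x _
    rw [← sub_smul, Int.self_sub_floor]
  rw [hdiff]
  calc ‖∑ x ∈ c.support, Int.fract (c x) • x‖ ≤ ∑ x ∈ c.support, ‖Int.fract (c x) • x‖ :=
        norm_sum_le _ _
    _ ≤ ∑ x ∈ c.support, ‖x‖ := by
        apply Finset.sum_le_sum
        intro x _
        rw [norm_smul, Real.norm_eq_abs, abs_of_nonneg (Int.fract_nonneg _)]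
        nlinarith [Int.fract_lt_one (c x), Int.fract_nonneg (c x), norm_nonneg x]
    _ ≤ C := by
        rw [hC]
        apply Finset.sum_le_sum_of_subset_of_nonneg
        · intro x hx
          rw [hbF, Set.Finite.mem_toFinset]
          exact hcsupp hx
        · intro x _ _
          exact norm_nonneg x

end AIso

end Part7
noncomputable section Part8

open Submodule Metric

variable {F : Type*} [NormedAddCommGroup F] [InnerProductSpace ℝ F]
  [FiniteDimensional ℝ F]

namespace AIso

/-- restriction of a linear isometry preserving `W` to `W` -/
def restrictIso (A : F ≃ₗᵢ[ℝ] F) (W : Submodule ℝ F)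
    (h1 : ∀ x ∈ W, A x ∈ W) (h2 : ∀ x ∈ W, A.symm x ∈ W) : (↥W ≃ₗᵢ[ℝ] ↥W) where
  toLinearEquiv :=
    { toFun := fun x => ⟨A x, h1 x x.2⟩
      map_add' := by intro x y; ext; simp
      map_smul' := by intro c x; ext; simp
      invFun := fun x => ⟨A.symm x, h2 x x.2⟩
      left_inv := by intro x; ext; simp
      right_inv := by intro x; ext; simp }
  norm_map' := by intro x; exact A.norm_map x

@[simp] lemma restrictIso_apply (A : F ≃ₗᵢ[ℝ] F) (W : Submodule ℝ F)
    (h1 : ∀ x ∈ W, A x ∈ W) (h2 : ∀ x ∈ W, A.symm x ∈ W) (x : ↥W) :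
    ((restrictIso A W h1 h2) x : F) = A x := rfl

lemma pj_add (W : Submodule ℝ F) (x y : F) : pj W (x + y) = pj W x + pj W y := by
  simp [pj, map_add]

lemma pj_comm {A : F ≃ₗᵢ[ℝ] F} {W : Submodule ℝ F}
    (h1 : ∀ x ∈ W, A x ∈ W) (h2 : ∀ x ∈ Wᗮ, A x ∈ Wᗮ) (x : F) :
    pj W (A x) = A (pj W x) := by
  have hdec : pj W x + pj Wᗮ x = x :=
    Submodule.starProjection_add_starProjection_orthogonal (K := W) x
  have h3 : A x = A (pj W x) + A (pj Wᗮ x) := by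
    rw [← map_add]
    congr 1
    exact hdec.symm
  rw [h3, pj_add]
  have e1 : pj W (A (pj W x)) = A (pj W x) :=
    pj_eq_self W (h1 _ (orthogonalProjection W x).2)
  have e2 : pj W (A (pj Wᗮ x)) = 0 := by
    have h4 : orthogonalProjection W (A (pj Wᗮ x)) = 0 :=
      orthogonalProjection_mem_subspace_orthogonalComplement_eq_zero
        (h2 _ (orthogonalProjection Wᗮ x).2)
    show ((orthogonalProjection W) (A (pj Wᗮ x)) : F) = 0
    rw [h4]
    rfl
  rw [e1, e2, add_zero]

variable (G : Subgroup (AIso F))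

/-- helper: every `g ∈ G` preserves `(spanT G)ᗮ` in both directions -/
lemma perp_pres {g : AIso F} (hg : g ∈ G) :
    (∀ x ∈ (spanT G)ᗮ, g.A x ∈ (spanT G)ᗮ) ∧
    (∀ x ∈ (spanT G)ᗮ, g.A.symm x ∈ (spanT G)ᗮ) := by
  constructor
  · intro x hx; exact A_maps_spanT_perp G hg hx
  · intro x hx
    have := A_maps_spanT_perp G (inv_mem hg) (v := x) hx
    rwa [inv_A] at this

/-- the projection homomorphism to the isometries of `(spanT G)ᗮ` -/
def projHom : ↥G →* AIso ↥((spanT G)ᗮ) where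
  toFun g := ⟨orthogonalProjection ((spanT G)ᗮ) (g : AIso F).a,
    restrictIso (g : AIso F).A ((spanT G)ᗮ) (perp_pres G g.2).1 (perp_pres G g.2).2⟩
  map_one' := by
    refine AIso.ext ?_ ?_
    · show orthogonalProjection ((spanT G)ᗮ) (0:F) = 0
      simp
    · apply LinearIsometryEquiv.ext
      intro x
      apply Subtype.ext
      rfl
  map_mul' := by
    intro g h
    refine AIso.ext ?_ ?_
    · apply Subtype.ext
      show pj ((spanT G)ᗮ) ((g:AIso F).a + (g:AIso F).A (h:AIso F).a) = _
      rw [pj_add]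
      have hcomm : pj ((spanT G)ᗮ) ((g:AIso F).A (h:AIso F).a)
          = (g:AIso F).A (pj ((spanT G)ᗮ) (h:AIso F).a) := by
        apply pj_comm (perp_pres G g.2).1
        intro x hx
        rw [Submodule.orthogonal_orthogonal] at hx ⊢
        exact A_maps_spanT G g.2 hx
      rw [hcomm]
      rfl
    · apply LinearIsometryEquiv.ext
      intro x
      apply Subtype.ext
      rfl

lemma projHom_a (g : ↥G) : (projHom G g).a = orthogonalProjection ((spanT G)ᗮ) (g : AIso F).a := rfl

lemma projHom_A (g : ↥G) (x : ↥((spanT G)ᗮ)) :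
    (((projHom G g).A x) : F) = (g : AIso F).A x := rfl

/-- powers: rotation part of a power -/
lemma pow_A (g : AIso F) (n : ℕ) : (g^n).A = g.A^n := by
  induction n with
  | zero => rfl
  | succ n ih =>
    rw [pow_succ, pow_succ, mul_A, ih]
    rfl

lemma pow_a (g : AIso F) (n : ℕ) : (g^(n+1)).a = (g^n).a + (g^n).A g.a := by
  rw [pow_succ, mul_a]

set_option maxHeartbeats 1000000 in
/-- **Bieberbach**: the translations of a crystallographic group span the whole space. -/
theorem spanT_top (hF : ∀ r : ℝ, {g : AIso F | g ∈ G ∧ ‖g.a‖ ≤ r}.Finite)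
    {R : ℝ} (hC : ∀ x : F, ∃ g ∈ G, ‖g.act x‖ ≤ R) : spanT G = ⊤ := by
  by_contra hne
  set W : Submodule ℝ F := (spanT G)ᗮ with hWdef
  have hWne : W ≠ ⊥ := fun h => hne (Submodule.orthogonal_eq_bot_iff.1 h)
  haveI : Nontrivial ↥W := Submodule.nontrivial_iff_ne_bot.2 hWne
  have hdim : 1 ≤ Module.finrank ℝ ↥W := Module.finrank_pos
  set G' : Subgroup (AIso ↥W) := (projHom G).range with hG'def
  obtain ⟨C, hC0, hred, b, hbL, hbfin, hbspan, hbnorm⟩ := exists_reduction G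
  -- finiteness for G'
  have hF' : ∀ r : ℝ, {g' : AIso ↥W | g' ∈ G' ∧ ‖g'.a‖ ≤ r}.Finite := by
    intro r
    have hbig : {g : AIso F | g ∈ G ∧ ‖g.a‖ ≤ r + C}.Finite := hF (r + C)
    have hsub : {g' : AIso ↥W | g' ∈ G' ∧ ‖g'.a‖ ≤ r} ⊆
        (fun gg : ↥G => projHom G gg) '' (Subtype.val ⁻¹' {g : AIso F | g ∈ G ∧ ‖g.a‖ ≤ r + C}) := by
      rintro g' ⟨hg'G, hg'r⟩
      obtain ⟨x, hx⟩ := hg'G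
      set g : AIso F := (x : AIso F) with hgdef
      have hmemv : pj (spanT G) g.a ∈ spanT G := (orthogonalProjection (spanT G) g.a).2
      obtain ⟨l, hlL, hlC⟩ := hred _ hmemv
      have hlG : AIso.trans (-l) ∈ G := by
        have := AddSubgroup.neg_mem _ hlL
        exact (transGrp_mem G).1 this
      set g2 : AIso F := AIso.trans (-l) * g with hg2def
      have hg2G : g2 ∈ G := mul_mem hlG x.2
      have hg2a : g2.a = -l + g.a := by
        rw [hg2def, mul_a]
        rfl
      have hg2A : g2.A = g.A := by
        apply LinearIsometryEquiv.ext
        intro v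
        rfl
      -- norm bound
      have hdec : pj (spanT G) g.a + pj ((spanT G)ᗮ) g.a = g.a :=
        Submodule.starProjection_add_starProjection_orthogonal (K := spanT G) g.a
      have hnorm : ‖g2.a‖ ≤ r + C := by
        have h1 : g2.a = (pj (spanT G) g.a - l) + pj ((spanT G)ᗮ) g.a := by
          rw [hg2a]
          conv_lhs => rw [← hdec]
          abel
        have h2 : ‖pj ((spanT G)ᗮ) g.a‖ ≤ r := by
          have h3 : (g'.a : F) = pj ((spanT G)ᗮ) g.a := by
            rw [← hx]; rfl
          rw [← h3]
          exact hg'r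
        calc ‖g2.a‖ = ‖(pj (spanT G) g.a - l) + pj ((spanT G)ᗮ) g.a‖ := by rw [h1]
          _ ≤ ‖pj (spanT G) g.a - l‖ + ‖pj ((spanT G)ᗮ) g.a‖ := norm_add_le _ _
          _ ≤ C + r := add_le_add hlC h2
          _ = r + C := by ring
      refine ⟨⟨g2, hg2G⟩, ⟨hg2G, hnorm⟩, ?_⟩
      -- projHom sends g2 to g'
      rw [← hx]
      refine AIso.ext ?_ ?_
      · apply Subtype.ext
        show pj ((spanT G)ᗮ) g2.a = pj ((spanT G)ᗮ) g.a
        rw [hg2a, pj_add]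
        have : pj ((spanT G)ᗮ) (-l) = 0 := by
          have hmem : -l ∈ ((spanT G)ᗮ)ᗮ :=
            Submodule.le_orthogonal_orthogonal _ (Submodule.neg_mem _ (Submodule.subset_span hlL))
          have h4 : orthogonalProjection ((spanT G)ᗮ) (-l) = 0 :=
            orthogonalProjection_mem_subspace_orthogonalComplement_eq_zero hmem
          show ((orthogonalProjection ((spanT G)ᗮ)) (-l) : F) = 0
          rw [h4]
          rfl
        rw [this, zero_add]
      · apply LinearIsometryEquiv.ext
        intro v
        apply Subtype.ext
        show g2.A (v : F) = g.A (v : F)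
        rw [hg2A]
    exact (hbig.preimage (Set.injOn_of_injective Subtype.val_injective)).image _ |>.subset hsub
  -- cocompactness for G'
  have hC' : ∀ y : ↥W, ∃ g' ∈ G', ‖g'.act y‖ ≤ R := by
    intro y
    obtain ⟨g, hgG, hgR⟩ := hC (y : F)
    refine ⟨projHom G ⟨g, hgG⟩, ⟨⟨g, hgG⟩, rfl⟩, ?_⟩
    have h1 : ((projHom G ⟨g, hgG⟩).act y : F) = pj ((spanT G)ᗮ) (g.act (y : F)) := by
      show (orthogonalProjection ((spanT G)ᗮ) g.a : F) + g.A (y:F) = _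
      have h2 : g.act (y:F) = g.a + g.A (y:F) := rfl
      rw [h2, pj_add]
      have h3 : pj ((spanT G)ᗮ) (g.A (y:F)) = g.A (y:F) :=
        pj_eq_self _ ((perp_pres G hgG).1 _ y.2)
      rw [h3]
      rfl
    have h4 : ‖(projHom G ⟨g, hgG⟩).act y‖ = ‖((projHom G ⟨g, hgG⟩).act y : F)‖ := rfl
    rw [h4, h1]
    exact (pj_norm_le _ _).trans hgR
  -- apply the key lemma
  obtain ⟨g', hg'G, hg'A, hg'a⟩ := exists_translation G' hF' hC' hdim
  obtain ⟨x, hx⟩ := hg'G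
  set g : AIso F := (x : AIso F) with hgdef
  have hgG : g ∈ G := x.2
  -- the rotation part of g fixes W pointwise
  have hA' : ∀ v ∈ W, g.A v = v := by
    intro v hv
    have h1 : (projHom G x).A = g'.A := by rw [hx]
    have h2 := congrArg (fun t => (t ⟨v, hv⟩ : F)) h1
    simp only [hg'A] at h2
    calc g.A v = ((projHom G x).A ⟨v, hv⟩ : F) := rfl
      _ = ((LinearIsometryEquiv.refl ℝ ↥W) ⟨v, hv⟩ : F) := h2
      _ = v := rfl
  have ha' : (g'.a : F) = pj W g.a := by rw [← hx]; rfl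
  -- finite order argument
  set Lb : Set F := {v : F | v ∈ transGrp G ∧ ‖v‖ ≤ C} with hLbdef
  have hLbfin : Lb.Finite := by
    apply Set.Finite.subset ((hF C).image (fun g => g.a))
    rintro v ⟨hvL, hvC⟩
    exact ⟨AIso.trans v, ⟨(transGrp_mem G).1 hvL, hvC⟩, rfl⟩
  have hbLb : b ⊆ Lb := fun v hv => ⟨hbL hv, hbnorm v hv⟩
  have hApow : ∀ n : ℕ, ∀ v ∈ Lb, (g.A^n) v ∈ Lb := by
    intro n
    induction n with
    | zero => intro v hv; exact hv
    | succ n ih =>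
      intro v hv
      have h1 : (g.A^(n+1)) v = g.A ((g.A^n) v) := by rw [pow_succ']; rfl
      rw [h1]
      obtain ⟨hL, hC2⟩ := ih v hv
      refine ⟨A_maps_L G hgG hL, ?_⟩
      rw [g.A.norm_map]
      exact hC2
  haveI : Finite ↥Lb := hLbfin.to_subtype
  obtain ⟨n, m, hnm, hθ⟩ := Finite.exists_ne_map_eq_of_infinite
    (fun n : ℕ => (fun v : ↥Lb => (⟨(g.A^n) v, hApow n v v.2⟩ : ↥Lb)))
  have hpt : ∀ v ∈ Lb, (g.A^n) v = (g.A^m) v := by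
    intro v hv
    exact congrArg Subtype.val (congrFun hθ ⟨v, hv⟩)
  obtain ⟨i, j, hij, hpt'⟩ : ∃ i j : ℕ, i < j ∧ ∀ v ∈ Lb, (g.A^i) v = (g.A^j) v := by
    rcases hnm.lt_or_gt with hlt | hlt
    · exact ⟨n, m, hlt, hpt⟩
    · exact ⟨m, n, hlt, fun v hv => (hpt v hv).symm⟩
  set p : ℕ := j - i with hpdef
  have hp1 : 1 ≤ p := by omega
  have hpfix : ∀ v ∈ Lb, (g.A^p) v = v := by
    intro v hv
    have hij2 : i + p = j := by omega
    have h1 : (g.A^i) ((g.A^p) v) = (g.A^j) v := by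
      rw [← hij2, pow_add]
      rfl
    rw [← hpt' v hv] at h1
    exact (g.A^i).injective h1
  -- A^p fixes the span
  have hfixV : ∀ v ∈ spanT G, (g.A^p) v = v := by
    have hle : spanT G ≤ fixSpace (g.A^p) := by
      rw [← hbspan]
      apply Submodule.span_le.2
      intro v hv
      exact hpfix v (hbLb hv)
    intro v hv
    exact hle hv
  -- A^n fixes W
  have hfixW : ∀ n : ℕ, ∀ v ∈ W, (g.A^n) v = v := by
    intro n
    induction n with
    | zero => intro v _; rfl
    | succ n ih =>
      intro v hv
      have h1 : (g.A^(n+1)) v = g.A ((g.A^n) v) := by rw [pow_succ']; rfl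
      rw [h1, ih v hv, hA' v hv]
  have hApI : g.A^p = LinearIsometryEquiv.refl ℝ F := by
    apply LinearIsometryEquiv.ext
    intro v
    have hdec : pj (spanT G) v + pj ((spanT G)ᗮ) v = v :=
      Submodule.starProjection_add_starProjection_orthogonal (K := spanT G) v
    show (g.A^p) v = v
    calc (g.A^p) v = (g.A^p) (pj (spanT G) v + pj ((spanT G)ᗮ) v) := by rw [hdec]
      _ = (g.A^p) (pj (spanT G) v) + (g.A^p) (pj ((spanT G)ᗮ) v) := map_add _ _ _
      _ = pj (spanT G) v + pj ((spanT G)ᗮ) v := by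
          have e1 : (g.A^p) (pj (spanT G) v) = pj (spanT G) v :=
            hfixV _ (orthogonalProjection (spanT G) v).2
          have e2 : (g.A^p) (pj ((spanT G)ᗮ) v) = pj ((spanT G)ᗮ) v :=
            hfixW p _ (orthogonalProjection ((spanT G)ᗮ) v).2
          rw [e1, e2]
      _ = v := hdec
  -- g^p is a translation in the lattice
  have hgpA : (g^p).A = LinearIsometryEquiv.refl ℝ F := by rw [pow_A]; exact hApI
  have hgpL : (g^p).a ∈ transGrp G := by
    rw [transGrp_mem]
    have h1 : AIso.trans ((g^p).a) = g^p := AIso.ext rfl hgpA.symm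
    rw [h1]
    exact pow_mem hgG p
  -- projections add up
  have hWfix_a : ∀ n : ℕ, pj W ((g^n).a) = (n:ℝ) • pj W g.a := by
    intro n
    induction n with
    | zero =>
      rw [pow_zero]
      show pj W ((1 : AIso F).a) = ((0:ℕ):ℝ) • pj W g.a
      rw [one_a]
      simp [pj]
    | succ n ih =>
      rw [pow_a, pj_add]
      have h1 : pj W ((g^n).A g.a) = (g^n).A (pj W g.a) := by
        apply pj_comm (perp_pres G (pow_mem hgG n)).1
        intro x hx
        have hx' : x ∈ spanT G := by
          have h5 : x ∈ ((spanT G)ᗮ)ᗮ := hx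
          rwa [Submodule.orthogonal_orthogonal] at h5
        exact Submodule.le_orthogonal_orthogonal _ (A_maps_spanT G (pow_mem hgG n) hx')
      have h2 : (g^n).A (pj W g.a) = pj W g.a := by
        rw [pow_A]
        exact hfixW n _ (orthogonalProjection W g.a).2
      rw [ih, h1, h2]
      push_cast
      rw [add_smul, one_smul]
  have hzero : pj W ((g^p).a) = 0 := by
    have hmem : (g^p).a ∈ Wᗮ :=
      Submodule.le_orthogonal_orthogonal (spanT G) (Submodule.subset_span hgpL)
    have h4 : orthogonalProjection W ((g^p).a) = 0 :=
      orthogonalProjection_mem_subspace_orthogonalComplement_eq_zero hmem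
    show ((orthogonalProjection W) ((g^p).a) : F) = 0
    rw [h4]
    rfl
  have hsmul : (p:ℝ) • pj W g.a = 0 := by rw [← hWfix_a p]; exact hzero
  have hpj0 : pj W g.a = 0 := by
    rcases smul_eq_zero.1 hsmul with h1 | h1
    · exfalso
      have : (p:ℝ) ≠ 0 := Nat.cast_ne_zero.2 (by omega)
      exact this h1
    · exact h1
  apply hg'a
  apply Subtype.ext
  rw [ha', hpj0]
  rfl

end AIso

end Part8
noncomputable section Part9

open Submodule Metric

namespace Iso

variable {n : ℕ}

lemma trans_mul_trans' (a b : E n) : Iso.trans a * Iso.trans b = Iso.trans (a + b) := by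
  refine Iso.ext ?_ ?_ <;> simp [Iso.trans]

lemma trans_inv' (a : E n) : (Iso.trans a)⁻¹ = Iso.trans (-a) := by
  refine Iso.ext ?_ ?_
  · show -(LinearIsometryEquiv.refl ℝ (E n)).symm a = -a
    rfl
  · rfl

lemma conj_trans' (g : Iso n) (b : E n) : g * Iso.trans b * g⁻¹ = Iso.trans (g.A b) := by
  refine Iso.ext ?_ ?_
  · simp [Iso.trans]
  · ext v; simp [Iso.trans]

/-- the bridge isomorphism -/
def toAIso : Iso n ≃* AIso (E n) where
  toFun g := ⟨g.a, g.A⟩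
  invFun g := ⟨g.a, g.A⟩
  left_inv g := rfl
  right_inv g := rfl
  map_mul' g h := rfl

/-- Bieberbach's theorem for crystallographic subgroups of `Iso n`. -/
theorem spanS_top (Γ : Subgroup (Iso n)) (hΓ : Iso.IsCrystallographic Γ) :
    Iso.spanS (Γ : Set (Iso n)) = ⊤ := by
  set G : Subgroup (AIso (E n)) := Γ.map (toAIso : Iso n ≃* AIso (E n)).toMonoidHom with hGdef
  have hmem : ∀ g : Iso n, g ∈ Γ ↔ (toAIso g : AIso (E n)) ∈ G := by
    intro g
    constructor
    · intro hg; exact ⟨g, hg, rfl⟩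
    · rintro ⟨g', hg', hg'e⟩
      have : g' = g := by
        have := congrArg (toAIso.symm) hg'e
        simpa using this
      rwa [← this]
  have htv : (AIso.transGrp G : Set (E n)) = Iso.transVecs (Γ : Set (Iso n)) := by
    ext a
    show AIso.trans a ∈ G ↔ Iso.trans a ∈ Γ
    constructor
    · intro h
      have : (toAIso (Iso.trans a) : AIso (E n)) ∈ G := h
      exact (hmem _).2 this
    · intro h
      exact (hmem _).1 h
  have hspan : AIso.spanT G = Iso.spanS (Γ : Set (Iso n)) := by
    rw [AIso.spanT, Iso.spanS, htv]
  -- finiteness hypothesis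
  have hF : ∀ r : ℝ, {g : AIso (E n) | g ∈ G ∧ ‖g.a‖ ≤ r}.Finite := by
    intro r
    set K : Set (E n) := Metric.closedBall 0 (max r 0) with hK
    have hKc : IsCompact K := isCompact_closedBall _ _
    have hfin := hΓ.1 K hKc
    apply Set.Finite.subset (hfin.image (fun g => (toAIso g : AIso (E n))))
    rintro g' ⟨hg'G, hg'r⟩
    obtain ⟨g, hgΓ, hge⟩ := hg'G
    refine ⟨g, ⟨hgΓ, ?_⟩, hge⟩
    have h0K : (0 : E n) ∈ K := by
      rw [hK, Metric.mem_closedBall, dist_self]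
      exact le_max_right r 0
    have hga : g.act 0 = g.a := by
      simp [Iso.act]
    have hgaK : g.a ∈ K := by
      rw [hK, Metric.mem_closedBall, dist_zero_right]
      have : ‖g.a‖ ≤ r := by
        have : g.a = g'.a := by rw [← hge]; rfl
        rw [this]; exact hg'r
      exact le_trans this (le_max_left r 0)
    exact ⟨g.a, ⟨⟨0, h0K, hga⟩, hgaK⟩⟩
  -- cocompactness hypothesis
  obtain ⟨K, hKc, hKcov⟩ := hΓ.2
  obtain ⟨R, hKR⟩ := hKc.isBounded.subset_closedBall 0
  have hC : ∀ x : E n, ∃ g ∈ G, ‖g.act x‖ ≤ R := by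
    intro x
    obtain ⟨g, hgΓ, hgx⟩ := hKcov x
    refine ⟨toAIso g, (hmem g).1 hgΓ, ?_⟩
    have : (toAIso g : AIso (E n)).act x = g.act x := rfl
    rw [this]
    have := hKR hgx
    rwa [Metric.mem_closedBall, dist_zero_right] at this
  have := AIso.spanT_top G hF hC
  rw [hspan] at this
  exact this

/-- **Key lemma**: if an element of a normal subgroup `N` of a crystallographic group `Γ`
has rotation part fixing `Span N` pointwise, then its rotation part is trivial. -/
theorem KL (Γ N : Subgroup (Iso n)) (hΓ : Iso.IsCrystallographic Γ)
    (hN : Iso.IsNormalIn N Γ) {g : Iso n} (hg : g ∈ N)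
    (hfix : ∀ v ∈ Iso.spanS (N : Set (Iso n)), g.A v = v) :
    g.A = LinearIsometryEquiv.refl ℝ (E n) := by
  set V : Submodule ℝ (E n) := Iso.spanS (N : Set (Iso n)) with hVdef
  -- the rotation part maps Vᗮ to Vᗮ
  have hperp : ∀ w ∈ Vᗮ, g.A w ∈ Vᗮ := by
    intro w hw
    rw [Submodule.mem_orthogonal]
    intro v hv
    calc (inner ℝ v (g.A w) : ℝ) = inner ℝ (g.A v) (g.A w) := by rw [hfix v hv]
      _ = inner ℝ v w := g.A.inner_map_map v w
      _ = 0 := (Submodule.mem_orthogonal V w).1 hw v hv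
  -- commutator argument: A fixes all translation vectors of Γ
  have hcomm : ∀ b ∈ Iso.transVecs (Γ : Set (Iso n)), g.A b - b ∈ V := by
    intro b hb
    have htΓ : Iso.trans b ∈ Γ := hb
    have h1 : Iso.trans b * g⁻¹ * (Iso.trans b)⁻¹ ∈ N :=
      hN.2 _ htΓ _ (inv_mem hg)
    have h2 : g * (Iso.trans b * g⁻¹ * (Iso.trans b)⁻¹) ∈ N := mul_mem hg h1
    have h3 : g * (Iso.trans b * g⁻¹ * (Iso.trans b)⁻¹)
        = Iso.trans (g.A b) * (Iso.trans b)⁻¹ := by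
      rw [← conj_trans' g b]
      group
    rw [h3, trans_inv', trans_mul_trans'] at h2
    have h4 : g.A b + -b ∈ Iso.transVecs (N : Set (Iso n)) := h2
    have h5 : g.A b + -b ∈ V := Submodule.subset_span h4
    rwa [← sub_eq_add_neg] at h5
  have hfixb : ∀ b ∈ Iso.transVecs (Γ : Set (Iso n)), g.A b = b := by
    intro b hb
    have hdec : AIso.pj V b + AIso.pj Vᗮ b = b :=
      Submodule.starProjection_add_starProjection_orthogonal (K := V) b
    have h1 : g.A b - b = g.A (AIso.pj Vᗮ b) - AIso.pj Vᗮ b := by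
      conv_lhs => rw [← hdec]
      rw [map_add]
      have e1 : g.A (AIso.pj V b) = AIso.pj V b := hfix _ (orthogonalProjection V b).2
      rw [e1]
      abel
    have h2 : g.A b - b ∈ Vᗮ := by
      rw [h1]
      exact Submodule.sub_mem _ (hperp _ (orthogonalProjection Vᗮ b).2)
        (orthogonalProjection Vᗮ b).2
    have h3 : g.A b - b ∈ V := hcomm b hb
    have h4 : g.A b - b = 0 := by
      have := (Submodule.orthogonal_disjoint V).le_bot ⟨h3, h2⟩
      simpa using this
    have := sub_eq_zero.1 h4
    exact this
  -- conclude via Bieberbach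
  have hspan := spanS_top Γ hΓ
  have hle : Iso.spanS (Γ : Set (Iso n)) ≤ AIso.fixSpace g.A := by
    apply Submodule.span_le.2
    intro b hb
    exact hfixb b hb
  apply LinearIsometryEquiv.ext
  intro x
  have hx : x ∈ AIso.fixSpace g.A := by
    apply hle
    rw [hspan]
    exact Submodule.mem_top
  exact hx

end Iso

end Part9



/-- Let `Γ` be a crystallographic group with translation group `T` and
point group `Π`, and let `N` be a normal subgroup of `Γ`. Then: the group of translations
of `N` (the elements of `N` acting as translations on `Span(N)`) is `N ∩ T`; the point
group of `N` (acting on `Span(N)` by restriction) is isomorphic to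
`Φ = {A ∈ Π : a+A ∈ N for some a}` (the set of linear parts of `N`, the restriction to
`Span(N)` being injective on it); and `Φ` is a normal subgroup of `Π`. -/
theorem stmt16 {n : ℕ} (Γ N : Subgroup (Iso n)) (hΓ : Iso.IsCrystallographic Γ)
    (hN : Iso.IsNormalIn N Γ) :
    ({g : Iso n | g ∈ N ∧ ∃ c : E n, ∀ v ∈ Iso.spanS (N : Set (Iso n)), g.act v = c + v}
        = {g : Iso n | g ∈ N ∧ g ∈ Iso.translations n}) ∧
    ((Iso.pointGroup N : Set (E n ≃ₗᵢ[ℝ] E n))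
        = {A : E n ≃ₗᵢ[ℝ] E n | ∃ a : E n, (⟨a, A⟩ : Iso n) ∈ N}) ∧
    (∀ g ∈ N, ∀ h ∈ N,
        (∀ v ∈ Iso.spanS (N : Set (Iso n)), g.A v = h.A v) → g.A = h.A) ∧
    (∀ Pg ∈ Iso.pointGroup Γ, ∀ A ∈ Iso.pointGroup N,
        Pg * A * Pg⁻¹ ∈ Iso.pointGroup N) := by
  refine ⟨?_, ?_, ?_, ?_⟩
  · -- bullet 1
    ext g
    simp only [Set.mem_setOf_eq]
    constructor
    · rintro ⟨hgN, c, hc⟩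
      refine ⟨hgN, ?_⟩
      have hc0 : g.act 0 = c + 0 := hc 0 (Submodule.zero_mem _)
      have hca : c = g.a := by
        have h1 : g.act 0 = g.a := by simp [Iso.act]
        rw [h1] at hc0
        rw [hc0, add_zero]
      have hfix : ∀ v ∈ Iso.spanS (N : Set (Iso n)), g.A v = v := by
        intro v hv
        have h2 := hc v hv
        rw [hca] at h2
        have h3 : g.a + g.A v = g.a + v := h2
        exact add_left_cancel h3
      exact Iso.KL Γ N hΓ hN hgN hfix
    · rintro ⟨hgN, htr⟩
      refine ⟨hgN, g.a, ?_⟩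
      intro v _
      show g.a + g.A v = g.a + v
      have : g.A = LinearIsometryEquiv.refl ℝ (E n) := htr
      rw [this]
      rfl
  · -- bullet 2
    ext A
    simp only [Set.mem_setOf_eq, SetLike.mem_coe]
    rw [Iso.pointGroup, Subgroup.mem_map]
    constructor
    · rintro ⟨g, hgN, hA⟩
      refine ⟨g.a, ?_⟩
      have : (⟨g.a, A⟩ : Iso n) = g := by
        refine Iso.ext rfl ?_
        exact hA.symm
      rwa [this]
    · rintro ⟨a, ha⟩
      exact ⟨⟨a, A⟩, ha, rfl⟩
  · -- bullet 3
    intro g hg h hh hgh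
    set k := g⁻¹ * h with hk
    have hkN : k ∈ N := mul_mem (inv_mem hg) hh
    have hkfix : ∀ v ∈ Iso.spanS (N : Set (Iso n)), k.A v = v := by
      intro v hv
      have h1 : k.A v = g.A.symm (h.A v) := rfl
      rw [h1, ← hgh v hv, g.A.symm_apply_apply]
    have hkA := Iso.KL Γ N hΓ hN hkN hkfix
    apply LinearIsometryEquiv.ext
    intro x
    have h2 : k.A x = x := by rw [hkA]; rfl
    have h3 : g.A.symm (h.A x) = x := h2
    calc g.A x = g.A (g.A.symm (h.A x)) := by rw [h3]
      _ = h.A x := g.A.apply_symm_apply _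
  · -- bullet 4
    intro Pg hPg A hA
    rw [Iso.pointGroup, Subgroup.mem_map] at hPg hA ⊢
    obtain ⟨γ, hγ, hγe⟩ := hPg
    obtain ⟨ν, hν, hνe⟩ := hA
    refine ⟨γ * ν * γ⁻¹, hN.2 γ hγ ν hν, ?_⟩
    rw [map_mul, map_mul, map_inv, hγe, hνe]
end
end

section
/- If Γ is a crystallographic group with translation group T, then the translation subgroup of the crystallographic group Γ/Z(Γ) is T/Z(Γ), and the point group of Γ/Z(Γ) is isomorphic to the point group of Γ. -/
noncomputable section

/-- The isometry of `E n / V ≅ Vᗮ` induced by `g`, where `V = Span(N)`: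
`V + x ↦ V + g.a + g.A x`, realized on `Vᗮ` via orthogonal projection. -/
noncomputable def quotAct {n : ℕ} (N : Subgroup (Iso n)) (g : Iso n) (x : E n) : E n :=
  (Submodule.orthogonalProjectionOnto (Iso.spanS (N : Set (Iso n)))ᗮ (g.act x) : E n)

/-- The center `Z(Γ)` of `Γ`, as a subgroup of `Iso n`. -/
def center' {n : ℕ} (Γ : Subgroup (Iso n)) : Subgroup (Iso n) :=
  Subgroup.centralizer (Γ : Set (Iso n)) ⊓ Γ

-- Every element of `Γ` fixes `Span(Z(Γ))` pointwise (linear part).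
lemma fix_center {n : ℕ} (Γ : Subgroup (Iso n)) {g : Iso n} (hg : g ∈ Γ) :
    ∀ v ∈ Iso.spanS ((center' Γ : Subgroup (Iso n)) : Set (Iso n)), g.A v = v := by
  intro v hv
  refine Submodule.span_induction ?_ ?_ ?_ ?_ hv
  · intro x hx
    have hx' : Iso.trans x ∈ center' Γ := hx
    have hc : Iso.trans x ∈ Subgroup.centralizer (Γ : Set (Iso n)) := hx'.1
    have := (Subgroup.mem_centralizer_iff.mp hc) g hg
    have ha := congrArg Iso.a this
    simp [Iso.trans] at ha
    -- (g * trans x).a = g.a + g.A x ; (trans x * g).a = x + g.a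
    linear_combination (norm := module) ha
  · simp
  · intro x y _ _ hx hy; rw [map_add, hx, hy]
  · intro c x _ hx; rw [map_smul, hx]

lemma mapsTo_perp {n : ℕ} (Γ : Subgroup (Iso n)) {g : Iso n} (hg : g ∈ Γ) :
    ∀ x ∈ (Iso.spanS ((center' Γ : Subgroup (Iso n)) : Set (Iso n)))ᗮ,
      g.A x ∈ (Iso.spanS ((center' Γ : Subgroup (Iso n)) : Set (Iso n)))ᗮ := by
  intro x hx
  intro v hv
  have h1 : g.A v = v := fix_center Γ hg v hv
  calc inner ℝ v (g.A x) = inner ℝ (g.A v) (g.A x) := by rw [h1]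
    _ = (inner ℝ v x : ℝ) := g.A.inner_map_map v x
    _ = 0 := hx v hv

/-- If `Γ` is a crystallographic group with translation group `T`,
then the translation subgroup of the crystallographic group `Γ/Z(Γ)` (acting on
`E n / Span(Z(Γ))`) is `T/Z(Γ)` -- i.e. an element of `Γ` acts as a translation on the
quotient Euclidean space iff it is a translation -- and the point group of `Γ/Z(Γ)` is
isomorphic to the point group of `Γ` -- i.e. the restriction of linear parts to
`Span(Z(Γ))ᗮ` is injective on the point group. -/
theorem stmt18 {n : ℕ} (Γ : Subgroup (Iso n)) (hΓ : Iso.IsCrystallographic Γ) :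
    (∀ g ∈ Γ,
      ((∃ c : E n, ∀ x ∈ (Iso.spanS ((center' Γ : Subgroup (Iso n)) : Set (Iso n)))ᗮ,
          quotAct (center' Γ) g x = c + x) ↔ g.IsTranslation)) ∧
    (∀ g ∈ Γ, ∀ h ∈ Γ,
      (∀ x ∈ (Iso.spanS ((center' Γ : Subgroup (Iso n)) : Set (Iso n)))ᗮ,
          g.A x = h.A x) → g.A = h.A) := by
  set V := Iso.spanS ((center' Γ : Subgroup (Iso n)) : Set (Iso n)) with hV
  have hsup : V ⊔ Vᗮ = ⊤ := Submodule.sup_orthogonal_of_hasOrthogonalProjection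
  have key : ∀ g ∈ Γ, (∀ x ∈ Vᗮ, g.A x = x) → g.A = LinearIsometryEquiv.refl ℝ (E n) := by
    intro g hg hperp
    ext y
    have hy : y ∈ V ⊔ Vᗮ := hsup ▸ Submodule.mem_top
    obtain ⟨v, hv, w, hw, rfl⟩ := Submodule.mem_sup.mp hy
    simp only [LinearIsometryEquiv.coe_refl, id_eq, map_add]
    rw [fix_center Γ hg v hv, hperp w hw]
  constructor
  · intro g hg
    constructor
    · rintro ⟨c, hc⟩
      have hc0 := hc 0 (Submodule.zero_mem _)
      have hax : ∀ x ∈ Vᗮ, g.A x = x := by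
        intro x hx
        have h1 := hc x hx
        have h2 : quotAct (center' Γ) g x =
            (Submodule.orthogonalProjectionOnto Vᗮ g.a : E n) + g.A x := by
          simp only [quotAct, Iso.act, map_add, Submodule.coe_add]
          rw [← Submodule.starProjection_apply _ (g.A x), Submodule.starProjection_eq_self_iff.mpr (mapsTo_perp Γ hg x hx)]
        have h3 : quotAct (center' Γ) g 0 = (Submodule.orthogonalProjectionOnto Vᗮ g.a : E n) := by
          simp [quotAct, Iso.act, hV]
        rw [h2] at h1
        rw [h3] at hc0
        rw [add_zero] at hc0
        rw [hc0] at h1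
        exact add_left_cancel h1
      exact key g hg hax
    · intro htr
      refine ⟨(Submodule.orthogonalProjectionOnto Vᗮ g.a : E n), fun x hx => ?_⟩
      rw [Iso.IsTranslation] at htr
      simp only [quotAct, Iso.act, htr, LinearIsometryEquiv.coe_refl, id_eq, map_add,
        Submodule.coe_add]
      rw [← Submodule.starProjection_apply _ x, Submodule.starProjection_eq_self_iff.mpr hx]
  · intro g hg h hh hagree
    ext y
    have hy : y ∈ V ⊔ Vᗮ := hsup ▸ Submodule.mem_top
    obtain ⟨v, hv, w, hw, rfl⟩ := Submodule.mem_sup.mp hy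
    simp only [map_add]
    rw [fix_center Γ hg v hv, fix_center Γ hh v hv, hagree w hw]
end
end

section
/- Let Γ be the 2-dimensional crystallographic group generated by the translations t₁ = e₁+I, t₂ = e₂+I and γ = (1/2)e₁ + B where B = diag(1,−1) (the Klein bottle group pg). Then N = ⟨t₁⟩ is a complete normal subgroup of Γ with Γ/N infinite dihedral, and the extension 1 → N → Γ → Γ/N → 1 does not split. -/
noncomputable section

/-- The standard basis vector `e₁` of `E 2`. -/
def e₁ : E 2 := EuclideanSpace.single (0 : Fin 2) (1 : ℝ)

/-- The standard basis vector `e₂` of `E 2`. -/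
def e₂ : E 2 := EuclideanSpace.single (1 : Fin 2) (1 : ℝ)

/-- The reflection `B = diag(1,−1)`: the reflection of `E 2` through `span{e₁}`. -/
def B₂ : E 2 ≃ₗᵢ[ℝ] E 2 := Submodule.reflection (Submodule.span ℝ {e₁})

/-- The translation `t₁ = e₁ + I`. -/
def t₁ : Iso 2 := Iso.trans e₁

/-- The translation `t₂ = e₂ + I`. -/
def t₂ : Iso 2 := Iso.trans e₂

/-- The glide reflection `γ = (1/2)e₁ + B`. -/
def γ₀ : Iso 2 := ⟨(2⁻¹ : ℝ) • e₁, B₂⟩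

/-- The Klein bottle group `pg`: `Γ = ⟨t₁, t₂, γ⟩`. -/
def Γpg : Subgroup (Iso 2) := Subgroup.closure {t₁, t₂, γ₀}

/-- `N = ⟨t₁⟩`. -/
def Npg : Subgroup (Iso 2) := Subgroup.zpowers t₁


/-! ### Auxiliary lemmas -/

open Iso in
lemma inner_e₁_e₂ : (inner ℝ e₁ e₂ : ℝ) = 0 := by
  simp [e₁, e₂, EuclideanSpace.inner_single_left, EuclideanSpace.single_apply]

lemma e₂_mem_orth : e₂ ∈ (Submodule.span ℝ {e₁})ᗮ :=
  Submodule.mem_orthogonal_singleton_iff_inner_right.mpr inner_e₁_e₂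

lemma B₂_e₁ : B₂ e₁ = e₁ :=
  Submodule.reflection_mem_subspace_eq_self (Submodule.mem_span_singleton_self _)

lemma B₂_e₂ : B₂ e₂ = -e₂ := by
  rw [B₂]
  exact Submodule.reflection_mem_subspace_orthogonalComplement_eq_neg e₂_mem_orth

lemma apply0 (x y : ℝ) : (x • e₁ + y • e₂) (0 : Fin 2) = x := by
  simp [e₁, e₂, EuclideanSpace.single_apply]

lemma apply1 (x y : ℝ) : (x • e₁ + y • e₂) (1 : Fin 2) = y := by
  simp [e₁, e₂, EuclideanSpace.single_apply]

lemma B₂_vec (x y : ℝ) : B₂ (x • e₁ + y • e₂) = x • e₁ + (-y) • e₂ := by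
  rw [map_add, map_smul, map_smul, B₂_e₁, B₂_e₂]
  rw [neg_smul, smul_neg]

lemma B₂_trans_B₂ : B₂.trans B₂ = LinearIsometryEquiv.refl ℝ (E 2) := by
  refine LinearIsometryEquiv.ext fun x => ?_
  simp only [LinearIsometryEquiv.coe_trans, Function.comp_apply,
    LinearIsometryEquiv.coe_refl, id_eq, B₂]
  exact Submodule.reflection_reflection (Submodule.span ℝ {e₁}) x

lemma B₂_symm : B₂.symm = B₂ := Submodule.reflection_symm

lemma refl_symm' : (LinearIsometryEquiv.refl ℝ (E 2)).symm = LinearIsometryEquiv.refl ℝ (E 2) :=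
  rfl

lemma e₁_ne_zero : e₁ ≠ 0 := by
  intro h
  have := congrArg (fun v : E 2 => v 0) h
  simp [e₁, EuclideanSpace.single_apply] at this

lemma neg_e₂_ne_e₂ : -e₂ ≠ e₂ := by
  intro h
  have := congrArg (fun v : E 2 => v 1) h
  simp [e₂, EuclideanSpace.single_apply] at this
  norm_num at this

/-- Translations as a homomorphism from the additive group. -/
def τ : Multiplicative (E 2) →* Iso 2 where
  toFun a := Iso.trans a.toAdd
  map_one' := rfl
  map_mul' a b := by
    refine Iso.ext ?_ ?_ <;> simp [Iso.trans]

lemma t₁_zpow (m : ℤ) : t₁ ^ m = Iso.trans ((m : ℝ) • e₁) := by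
  have h1 : t₁ = τ (Multiplicative.ofAdd e₁) := rfl
  rw [h1, ← map_zpow, ← ofAdd_zsmul]
  rw [← Int.cast_smul_eq_zsmul ℝ]
  rfl

lemma t₂_zpow (m : ℤ) : t₂ ^ m = Iso.trans ((m : ℝ) • e₂) := by
  have h1 : t₂ = τ (Multiplicative.ofAdd e₂) := rfl
  rw [h1, ← map_zpow, ← ofAdd_zsmul]
  rw [← Int.cast_smul_eq_zsmul ℝ]
  rfl

lemma t₁_mem : t₁ ∈ Γpg := Subgroup.subset_closure (by simp)
lemma t₂_mem : t₂ ∈ Γpg := Subgroup.subset_closure (by simp)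
lemma γ₀_mem : γ₀ ∈ Γpg := Subgroup.subset_closure (by simp)

lemma Npg_le : Npg ≤ Γpg := by
  rw [Npg, Subgroup.zpowers_le]; exact t₁_mem

lemma γ₀_sq : γ₀ * γ₀ = t₁ := by
  refine Iso.ext ?_ ?_
  · show (2⁻¹ : ℝ) • e₁ + B₂ ((2⁻¹ : ℝ) • e₁) = e₁
    rw [map_smul, B₂_e₁]
    rw [← add_smul]
    norm_num
  · show B₂.trans B₂ = LinearIsometryEquiv.refl ℝ (E 2)
    exact B₂_trans_B₂

lemma commute_t₁_γ₀ : Commute t₁ γ₀ := by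
  show t₁ * γ₀ = γ₀ * t₁
  refine Iso.ext ?_ ?_
  · show e₁ + (LinearIsometryEquiv.refl ℝ (E 2)) ((2⁻¹:ℝ) • e₁)
        = (2⁻¹:ℝ) • e₁ + B₂ e₁
    rw [B₂_e₁]
    simp [add_comm]
  · show B₂.trans (LinearIsometryEquiv.refl ℝ (E 2))
        = (LinearIsometryEquiv.refl ℝ (E 2)).trans B₂
    simp

lemma commute_t₁ {g : Iso 2} (hg : g ∈ Γpg) : Commute t₁ g := by
  induction hg using Subgroup.closure_induction with
  | mem x hx =>
    rcases hx with h | h | h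
    · subst h; exact Commute.refl _
    · subst h
      show t₁ * t₂ = t₂ * t₁
      refine Iso.ext ?_ ?_
      · show e₁ + (LinearIsometryEquiv.refl ℝ (E 2)) e₂
            = e₂ + (LinearIsometryEquiv.refl ℝ (E 2)) e₁
        simp [add_comm]
      · simp [t₁, t₂, Iso.trans]
    · subst h; exact commute_t₁_γ₀
  | one => exact Commute.one_right _
  | mul x y hx hy ihx ihy => exact ihx.mul_right ihy
  | inv x hx ihx => exact ihx.inv_right

/-- The structure theorem for elements of `Γpg`. -/
lemma mem_struct {g : Iso 2} (hg : g ∈ Γpg) :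
    (g.A = LinearIsometryEquiv.refl ℝ (E 2) ∧
      ∃ p q : ℤ, g.a = (p : ℝ) • e₁ + (q : ℝ) • e₂) ∨
    (g.A = B₂ ∧ ∃ p q : ℤ, g.a = ((p : ℝ) + 2⁻¹) • e₁ + (q : ℝ) • e₂) := by
  induction hg using Subgroup.closure_induction with
  | mem x hx =>
    rcases hx with h | h | h
    · subst h
      exact Or.inl ⟨rfl, 1, 0, by push_cast; simp [t₁, Iso.trans]⟩
    · subst h
      exact Or.inl ⟨rfl, 0, 1, by push_cast; simp [t₂, Iso.trans]⟩
    · subst h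
      exact Or.inr ⟨rfl, 0, 0, by push_cast; simp [γ₀]⟩
  | one => exact Or.inl ⟨rfl, 0, 0, by push_cast; simp⟩
  | mul x y hx hy ihx ihy =>
    rcases ihx with ⟨hAx, p, q, hax⟩ | ⟨hAx, p, q, hax⟩ <;>
      rcases ihy with ⟨hAy, p', q', hay⟩ | ⟨hAy, p', q', hay⟩
    · refine Or.inl ⟨by rw [Iso.mul_A, hAx, hAy]; simp, p + p', q + q', ?_⟩
      rw [Iso.mul_a, hAx, hax, hay]
      push_cast
      simp only [LinearIsometryEquiv.coe_refl, id_eq]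
      module
    · refine Or.inr ⟨by rw [Iso.mul_A, hAx, hAy]; simp, p + p', q + q', ?_⟩
      rw [Iso.mul_a, hAx, hax, hay]
      push_cast
      simp only [LinearIsometryEquiv.coe_refl, id_eq]
      module
    · refine Or.inr ⟨by rw [Iso.mul_A, hAx, hAy]; simp, p + p', q - q', ?_⟩
      rw [Iso.mul_a, hAx, hax, hay, B₂_vec]
      push_cast
      module
    · refine Or.inl ⟨by rw [Iso.mul_A, hAx, hAy]; exact B₂_trans_B₂, p + p' + 1, q - q', ?_⟩
      rw [Iso.mul_a, hAx, hax, hay, B₂_vec]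
      push_cast
      module
  | inv x hx ihx =>
    rcases ihx with ⟨hAx, p, q, hax⟩ | ⟨hAx, p, q, hax⟩
    · refine Or.inl ⟨by rw [Iso.inv_A, hAx]; rfl, -p, -q, ?_⟩
      rw [Iso.inv_a, hAx, refl_symm', hax]
      push_cast
      simp only [LinearIsometryEquiv.coe_refl, id_eq]
      module
    · refine Or.inr ⟨by rw [Iso.inv_A, hAx, B₂_symm], -(p+1), q, ?_⟩
      rw [Iso.inv_a, hAx, B₂_symm, hax, B₂_vec]
      push_cast
      module

open Classical in
/-- Reading off an element of the infinite dihedral group from an isometry. -/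
def fD (g : Iso 2) : DihedralGroup 0 :=
  if g.A e₂ = e₂ then DihedralGroup.r (⌊g.a 1⌋ : ℤ)
  else DihedralGroup.sr ((-⌊g.a 1⌋ : ℤ))

lemma fD_eq_r {g : Iso 2} (hA : g.A = LinearIsometryEquiv.refl ℝ (E 2)) {q : ℤ}
    (hq : g.a 1 = (q : ℝ)) : fD g = DihedralGroup.r (q : ℤ) := by
  rw [fD, if_pos (by rw [hA]; rfl), hq, Int.floor_intCast]

lemma fD_eq_sr {g : Iso 2} (hA : g.A = B₂) {q : ℤ}
    (hq : g.a 1 = (q : ℝ)) : fD g = DihedralGroup.sr ((-q : ℤ)) := by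
  rw [fD, if_neg (by rw [hA, B₂_e₂]; exact neg_e₂_ne_e₂), hq, Int.floor_intCast]

lemma fD_mul {g h : Iso 2} (hg : g ∈ Γpg) (hh : h ∈ Γpg) :
    fD (g * h) = fD g * fD h := by
  rcases mem_struct hg with ⟨hAg, p, q, hag⟩ | ⟨hAg, p, q, hag⟩ <;>
    rcases mem_struct hh with ⟨hAh, p', q', hah⟩ | ⟨hAh, p', q', hah⟩
  · rw [fD_eq_r hAg (by rw [hag, apply1]), fD_eq_r hAh (by rw [hah, apply1]),
      fD_eq_r (g := g * h) (by rw [Iso.mul_A, hAg, hAh]; simp)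
        (q := q + q')
        (by rw [Iso.mul_a, hAg, hag, hah]; push_cast
            simp only [LinearIsometryEquiv.coe_refl, id_eq]
            rw [show ((p:ℝ)•e₁+(q:ℝ)•e₂) + ((p':ℝ)•e₁+(q':ℝ)•e₂)
                = ((p:ℝ)+(p':ℝ))•e₁+((q:ℝ)+(q':ℝ))•e₂ by module, apply1])]
    exact (DihedralGroup.r_mul_r (n := 0) q q').symm
  · rw [fD_eq_r hAg (by rw [hag, apply1]), fD_eq_sr hAh (by rw [hah, apply1]),
      fD_eq_sr (g := g * h) (by rw [Iso.mul_A, hAg, hAh]; simp)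
        (q := q + q')
        (by rw [Iso.mul_a, hAg, hag, hah]; push_cast
            simp only [LinearIsometryEquiv.coe_refl, id_eq]
            rw [show ((p:ℝ)•e₁+(q:ℝ)•e₂) + (((p':ℝ)+2⁻¹)•e₁+(q':ℝ)•e₂)
                = ((p:ℝ)+(p':ℝ)+2⁻¹)•e₁+((q:ℝ)+(q':ℝ))•e₂ by module, apply1])]
    refine Eq.trans ?_ (DihedralGroup.r_mul_sr (n := 0) q (-q')).symm
    congr 1
    exact (by ring : (-(q + q') : ℤ) = -q' - q)
  · rw [fD_eq_sr hAg (by rw [hag, apply1]), fD_eq_r hAh (by rw [hah, apply1]),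
      fD_eq_sr (g := g * h) (by rw [Iso.mul_A, hAg, hAh]; simp)
        (q := q - q')
        (by rw [Iso.mul_a, hAg, hag, hah, B₂_vec]; push_cast
            rw [show (((p:ℝ)+2⁻¹)•e₁+(q:ℝ)•e₂) + (((p':ℝ))•e₁+(-(q':ℝ))•e₂)
                = ((p:ℝ)+2⁻¹+(p':ℝ))•e₁+((q:ℝ)-(q':ℝ))•e₂ by module, apply1])]
    refine Eq.trans ?_ (DihedralGroup.sr_mul_r (n := 0) (-q) q').symm
    congr 1
    exact (by ring : (-(q - q') : ℤ) = -q + q')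
  · rw [fD_eq_sr hAg (by rw [hag, apply1]), fD_eq_sr hAh (by rw [hah, apply1]),
      fD_eq_r (g := g * h) (by rw [Iso.mul_A, hAg, hAh]; exact B₂_trans_B₂)
        (q := q - q')
        (by rw [Iso.mul_a, hAg, hag, hah, B₂_vec]; push_cast
            rw [show (((p:ℝ)+2⁻¹)•e₁+(q:ℝ)•e₂) + ((((p':ℝ)+2⁻¹))•e₁+(-(q':ℝ))•e₂)
                = ((p:ℝ)+2⁻¹+((p':ℝ)+2⁻¹))•e₁+((q:ℝ)-(q':ℝ))•e₂ by module, apply1])]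
    refine Eq.trans ?_ (DihedralGroup.sr_mul_sr (n := 0) (-q) (-q')).symm
    congr 1
    exact (by ring : (q - q' : ℤ) = -q' - -q)

lemma spanS_N : Iso.spanS (Npg : Set (Iso 2)) = Submodule.span ℝ {e₁} := by
  refine le_antisymm ?_ ?_
  · rw [Iso.spanS, Submodule.span_le]
    rintro a ha
    obtain ⟨m, hm⟩ := Subgroup.mem_zpowers_iff.mp (show Iso.trans a ∈ Npg from ha)
    rw [t₁_zpow] at hm
    have : a = (m : ℝ) • e₁ := (congrArg Iso.a hm).symm
    rw [this]
    exact Submodule.smul_mem _ _ (Submodule.mem_span_singleton_self _)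
  · rw [Submodule.span_le]
    rintro x hx
    rw [Set.mem_singleton_iff] at hx
    subst hx
    refine Submodule.subset_span ?_
    show Iso.trans e₁ ∈ Npg
    exact Subgroup.mem_zpowers_iff.mpr ⟨1, by rw [zpow_one]; rfl⟩


lemma mem_Npg_of_refl {g : Iso 2} {p : ℤ}
    (hA : g.A = LinearIsometryEquiv.refl ℝ (E 2)) (ha : g.a = (p : ℝ) • e₁) :
    g ∈ Npg :=
  Subgroup.mem_zpowers_iff.mpr ⟨p, by rw [t₁_zpow]; exact Iso.ext ha.symm hA.symm⟩

lemma smul_e₁_apply1 (c : ℝ) : (c • e₁) (1 : Fin 2) = 0 := by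
  rw [show c • e₁ = c • e₁ + (0:ℝ) • e₂ by module, apply1]

lemma smul_e₂_apply1 (c : ℝ) : (c • e₂) (1 : Fin 2) = c := by
  rw [show c • e₂ = (0:ℝ) • e₁ + c • e₂ by module, apply1]


lemma fD_t₂_zpow (j : ℤ) : fD (t₂ ^ j) = DihedralGroup.r j := by
  rw [t₂_zpow]
  exact fD_eq_r rfl (smul_e₂_apply1 _)

lemma fD_γ₀_t₂_zpow (j : ℤ) : fD (γ₀ * t₂ ^ j) = DihedralGroup.sr j := by
  have hA : (γ₀ * t₂ ^ j).A = B₂ := by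
    rw [Iso.mul_A, t₂_zpow]
    show (LinearIsometryEquiv.refl ℝ (E 2)).trans B₂ = B₂
    simp
  have ha : (γ₀ * t₂ ^ j).a 1 = ((-j : ℤ) : ℝ) := by
    rw [Iso.mul_a, t₂_zpow]
    show ((2⁻¹ : ℝ) • e₁ + B₂ ((j : ℝ) • e₂)) 1 = _
    rw [map_smul, B₂_e₂, show (2⁻¹:ℝ) • e₁ + (j:ℝ) • -e₂
      = (2⁻¹:ℝ) • e₁ + (-(j:ℝ)) • e₂ by module, apply1]
    push_cast
    ring
  rw [fD_eq_sr hA ha, neg_neg]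

/-- For the Klein bottle group `Γ = ⟨t₁, t₂, γ⟩` (`pg`),
`N = ⟨t₁⟩` is a complete normal subgroup of `Γ`, `Γ/N` is infinite dihedral
(there is a surjection `Γ → D∞` with kernel `N`), and the extension
`1 → N → Γ → Γ/N → 1` does not split (no subgroup of `Γ` meeting `N` trivially
together with `N` generates all of `Γ` by products `x·s`). -/
theorem stmt19 :
    Iso.IsNormalIn Npg Γpg ∧
    Iso.completion Γpg (Npg : Set (Iso 2)) = (Npg : Set (Iso 2)) ∧
    (∃ f : ↥Γpg →* DihedralGroup 0, Function.Surjective f ∧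
      ∀ g : ↥Γpg, f g = 1 ↔ (g : Iso 2) ∈ Npg) ∧
    ¬ ∃ S : Subgroup (Iso 2), S ≤ Γpg ∧ S ⊓ Npg = ⊥ ∧
        ∀ g ∈ Γpg, ∃ x ∈ Npg, ∃ s ∈ S, g = x * s := by
  refine ⟨⟨Npg_le, ?_⟩, ?_, ?_, ?_⟩
  · -- Normality
    intro g hg x hx
    obtain ⟨m, hm⟩ := Subgroup.mem_zpowers_iff.mp hx
    have h := ((commute_t₁ hg).zpow_left m).eq
    have : g * (t₁ ^ m) * g⁻¹ = t₁ ^ m := by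
      rw [← h, mul_assoc, mul_inv_cancel, mul_one]
    rw [hm] at this
    rw [this, ← hm]
    exact Subgroup.zpow_mem _ (Subgroup.mem_zpowers t₁) _
  · -- Completeness
    ext g
    constructor
    · rintro ⟨hΓ, hsp, hfix⟩
      rw [spanS_N] at hsp hfix
      have he₂ := hfix e₂ e₂_mem_orth
      rcases mem_struct hΓ with ⟨hA, p, q, ha⟩ | ⟨hA, p, q, ha⟩
      · obtain ⟨c, hc⟩ := Submodule.mem_span_singleton.mp hsp
        have h1 : g.a 1 = 0 := by rw [← hc, smul_e₁_apply1]
        rw [ha, apply1] at h1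
        have hq : (q : ℝ) = 0 := h1
        show g ∈ Npg
        exact mem_Npg_of_refl (p := p) hA (by rw [ha, hq]; module)
      · exfalso
        rw [hA, B₂_e₂] at he₂
        exact neg_e₂_ne_e₂ he₂
    · intro hg
      have hgN : g ∈ Npg := hg
      obtain ⟨m, hm⟩ := Subgroup.mem_zpowers_iff.mp hgN
      refine ⟨Npg_le hgN, ?_, ?_⟩
      · rw [spanS_N, ← hm, t₁_zpow]
        exact Submodule.smul_mem _ _ (Submodule.mem_span_singleton_self _)
      · intro x hx
        rw [← hm, t₁_zpow]
        rfl
  · -- Γ/N ≅ D∞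
    refine ⟨MonoidHom.mk' (fun g => fD g.1) (fun g h => fD_mul g.2 h.2), ?_, ?_⟩
    · intro x
      cases x with
      | r i =>
        exact ⟨⟨t₂ ^ (show ℤ from i), Subgroup.zpow_mem _ t₂_mem _⟩, fD_t₂_zpow _⟩
      | sr i =>
        exact ⟨⟨γ₀ * t₂ ^ (show ℤ from i),
          mul_mem γ₀_mem (Subgroup.zpow_mem _ t₂_mem _)⟩, fD_γ₀_t₂_zpow _⟩
    · intro g
      constructor
      · intro h1
        have h1' : fD g.1 = 1 := h1
        rcases mem_struct g.2 with ⟨hA, p, q, ha⟩ | ⟨hA, p, q, ha⟩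
        · rw [fD_eq_r hA (by rw [ha, apply1]), DihedralGroup.one_def] at h1'
          have hq0 : q = (0 : ℤ) := DihedralGroup.r.inj h1'
          have hq : (q : ℝ) = 0 := by rw [hq0]; norm_num
          exact mem_Npg_of_refl (p := p) hA (by rw [ha, hq]; module)
        · rw [fD_eq_sr hA (by rw [ha, apply1])] at h1'
          rw [DihedralGroup.one_def] at h1'
          cases h1'
      · intro hN
        obtain ⟨m, hm⟩ := Subgroup.mem_zpowers_iff.mp hN
        show fD g.1 = 1
        rw [← hm, t₁_zpow, DihedralGroup.one_def]
        refine fD_eq_r rfl (q := 0) ?_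
        show ((m : ℝ) • e₁) 1 = ((0 : ℤ) : ℝ)
        rw [smul_e₁_apply1]
        norm_num
  · -- no splitting
    rintro ⟨S, hSΓ, hSN, hsplit⟩
    obtain ⟨x, hx, s, hs, hgs⟩ := hsplit γ₀ γ₀_mem
    obtain ⟨m, hm⟩ := Subgroup.mem_zpowers_iff.mp hx
    have hsval : s = t₁ ^ (-m) * γ₀ := by
      rw [zpow_neg, hm]
      exact (eq_inv_mul_iff_mul_eq.mpr hgs.symm)
    have hc := (commute_t₁_γ₀.zpow_left (-m)).eq
    have hss : s * s = t₁ ^ (-m + -m + 1) := by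
      rw [hsval]
      calc t₁^(-m) * γ₀ * (t₁^(-m) * γ₀)
          = t₁^(-m) * (γ₀ * t₁^(-m)) * γ₀ := by group
        _ = t₁^(-m) * (t₁^(-m) * γ₀) * γ₀ := by rw [← hc]
        _ = (t₁^(-m) * t₁^(-m)) * (γ₀ * γ₀) := by group
        _ = t₁^(-m + -m) * t₁ := by rw [γ₀_sq, ← zpow_add]
        _ = t₁ ^ (-m + -m + 1) := by rw [← zpow_add_one]
    have hmem : s * s ∈ S ⊓ Npg :=
      ⟨mul_mem hs hs, by rw [hss]; exact Subgroup.zpow_mem _ (Subgroup.mem_zpowers t₁) _⟩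
    rw [hSN, Subgroup.mem_bot, hss, t₁_zpow] at hmem
    have h0 := congrArg Iso.a hmem
    rcases smul_eq_zero.mp h0 with h | h
    · have : (-m + -m + 1 : ℤ) = 0 := by exact_mod_cast h
      omega
    · exact e₁_ne_zero h
end
end
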